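/- arXiv:2011.13666 — 7 statements merged into one kernel-verified Lean document; each statement's English description precedes it below -/
import Mathlib

section
/- Let g : [a,b] → ℝ be continuous and nonnegative with g(a) = g(b) = 0, and let E = C(g,[a,b]) ⊆ ℝⁿ be the associated solid of revolution about the x₁-axis. Then for every fixed x₁ ∈ ℝ, the function x' ↦ d̄_E(x₁, x') on ℝ^{n-1} (signed distance to E) is radially symmetric, i.e., it depends only on |x'|, and it is strictly increasing as a function of |x'|. -/
open Set Metric Classical
open scoped RealInnerProductSpace

noncomputable def sdist {n : ℕ} (E : Set (EuclideanSpace ℝ (Fin n)))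
    (x : EuclideanSpace ℝ (Fin n)) : ℝ :=
  if x ∈ E then -Metric.infDist x Eᶜ else Metric.infDist x E

namespace SdistProof

variable {n : ℕ}

/-- the radial part of a vector -/
noncomputable def pr [NeZero n] (z : EuclideanSpace ℝ (Fin n)) : EuclideanSpace ℝ (Fin n) :=
  z - z 0 • EuclideanSpace.single (0 : Fin n) (1:ℝ)

/-- canonical planar point -/
noncomputable def pt [NeZero n] (t τ : ℝ) : EuclideanSpace ℝ (Fin n) :=
  t • EuclideanSpace.single (0 : Fin n) (1:ℝ) + τ • EuclideanSpace.single (1 : Fin n) (1:ℝ)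

variable [NeZero n]

lemma pr_apply_zero (z : EuclideanSpace ℝ (Fin n)) : pr z 0 = 0 := by
  simp [pr, PiLp.sub_apply, PiLp.smul_apply, EuclideanSpace.single_apply]

lemma aux_le_of_sq {a b : ℝ} (hb : 0 ≤ b) (h : a^2 ≤ b^2) : a ≤ b := by nlinarith

lemma aux_lt_of_sq {a b : ℝ} (hb : 0 ≤ b) (h : a^2 < b^2) : a < b := by nlinarith

lemma norm_sq_split (z w : EuclideanSpace ℝ (Fin n)) :
    ‖z - w‖^2 = (z 0 - w 0)^2 + ‖pr z - pr w‖^2 := by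
  have hzw : z - w = (z 0 - w 0) • EuclideanSpace.single (0 : Fin n) (1:ℝ) + (pr z - pr w) := by
    simp [pr, sub_smul]; abel
  have hinner : (inner ℝ ((z 0 - w 0) • EuclideanSpace.single (0 : Fin n) (1:ℝ)) (pr z - pr w) : ℝ) = 0 := by
    rw [real_inner_smul_left, EuclideanSpace.inner_single_left]
    simp [PiLp.sub_apply, pr_apply_zero]
  rw [hzw, norm_add_sq_real, hinner]
  have : ‖(z 0 - w 0) • EuclideanSpace.single (0 : Fin n) (1:ℝ)‖ = |z 0 - w 0| := by
    rw [norm_smul, EuclideanSpace.norm_single]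
    simp
  rw [this]
  ring_nf
  rw [sq_abs]
  ring


lemma fin_one_ne_zero (hn : 2 ≤ n) : (1 : Fin n) ≠ 0 := by
  intro h
  have h1 : ((1 : Fin n) : ℕ) = 1 % n := Fin.val_one' n
  have : 1 % n = 1 := Nat.mod_eq_of_lt (by omega)
  rw [this] at h1
  have h0 : ((0 : Fin n) : ℕ) = 0 := rfl
  rw [h] at h1
  omega

lemma pt_zero (h01 : (1 : Fin n) ≠ 0) (t τ : ℝ) : (pt t τ : EuclideanSpace ℝ (Fin n)) 0 = t := by
  have h10 : (0 : Fin n) ≠ 1 := Ne.symm h01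
  simp [pt, PiLp.add_apply, PiLp.smul_apply, EuclideanSpace.single_apply, h10, if_neg h10]

lemma pr_pt (h01 : (1 : Fin n) ≠ 0) (t τ : ℝ) :
    pr (pt t τ : EuclideanSpace ℝ (Fin n)) = τ • EuclideanSpace.single (1 : Fin n) (1:ℝ) := by
  rw [pr, pt_zero h01]
  simp [pt]

lemma norm_pr_pt (h01 : (1 : Fin n) ≠ 0) (t τ : ℝ) : ‖pr (pt t τ : EuclideanSpace ℝ (Fin n))‖ = |τ| := by
  rw [pr_pt h01, norm_smul, EuclideanSpace.norm_single]
  simp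

lemma dist_pt_sq (h01 : (1 : Fin n) ≠ 0) (t τ t' τ' : ℝ) :
    dist (pt t τ) (pt t' τ' : EuclideanSpace ℝ (Fin n))^2 = (t - t')^2 + (τ - τ')^2 := by
  rw [dist_eq_norm, norm_sq_split, pt_zero h01, pt_zero h01, pr_pt h01, pr_pt h01, ← sub_smul,
    norm_smul, EuclideanSpace.norm_single]
  simp [sq_abs]


lemma abs_coord_le (z w : EuclideanSpace ℝ (Fin n)) : |z 0 - w 0| ≤ ‖z - w‖ := by
  refine aux_le_of_sq (norm_nonneg _) ?_
  rw [sq_abs, norm_sq_split]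
  nlinarith [sq_nonneg ‖pr z - pr w‖]

lemma norm_pr_sub_le (z w : EuclideanSpace ℝ (Fin n)) : ‖pr z - pr w‖ ≤ ‖z - w‖ := by
  refine aux_le_of_sq (norm_nonneg _) ?_
  rw [norm_sq_split z w]
  nlinarith [sq_nonneg (z 0 - w 0)]

lemma cont_coord : Continuous (fun z : EuclideanSpace ℝ (Fin n) => z 0) := by
  refine LipschitzWith.continuous (K := 1) (LipschitzWith.of_dist_le_mul fun z w => ?_)
  rw [Real.dist_eq, dist_eq_norm]
  simpa using abs_coord_le z w

lemma cont_pr : Continuous (pr : EuclideanSpace ℝ (Fin n) → EuclideanSpace ℝ (Fin n)) := by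
  exact continuous_id.sub (cont_coord.smul continuous_const)

section Main

variable {a b : ℝ} {g : ℝ → ℝ} {E : Set (EuclideanSpace ℝ (Fin n))}

/-- global continuous extension of g -/
noncomputable def Gx (a b : ℝ) (hab : a ≤ b) (g : ℝ → ℝ) : ℝ → ℝ :=
  IccExtend hab ((Icc a b).restrict g)

lemma Gx_cont (hab : a ≤ b) (hgc : ContinuousOn g (Icc a b)) :
    Continuous (Gx a b hab g) := (ContinuousOn.restrict hgc).Icc_extend'

lemma Gx_eq (hab : a ≤ b) {t : ℝ} (ht : t ∈ Icc a b) : Gx a b hab g t = g t := by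
  rw [Gx, IccExtend_of_mem hab ((Icc a b).restrict g) ht]
  rfl

lemma mem_E
    (hE : E = {x : EuclideanSpace ℝ (Fin n) |
      x 0 ∈ Set.Icc a b ∧ ‖x - x 0 • EuclideanSpace.single (0 : Fin n) (1:ℝ)‖ ≤ g (x 0)})
    (z : EuclideanSpace ℝ (Fin n)) :
    z ∈ E ↔ z 0 ∈ Icc a b ∧ ‖pr z‖ ≤ g (z 0) := by
  rw [hE]; exact Iff.rfl

lemma E_nonempty (hab : a ≤ b) (hg0 : ∀ t ∈ Set.Icc a b, 0 ≤ g t)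
    (hE : E = {x : EuclideanSpace ℝ (Fin n) |
      x 0 ∈ Set.Icc a b ∧ ‖x - x 0 • EuclideanSpace.single (0 : Fin n) (1:ℝ)‖ ≤ g (x 0)}) :
    E.Nonempty := by
  refine ⟨a • EuclideanSpace.single (0 : Fin n) (1:ℝ), (mem_E hE _).2 ⟨?_, ?_⟩⟩
  · simp [PiLp.smul_apply, EuclideanSpace.single_apply, hab]
  · have h0 : (a • EuclideanSpace.single (0 : Fin n) (1:ℝ) : EuclideanSpace ℝ (Fin n)) 0 = a := by
      simp [PiLp.smul_apply, EuclideanSpace.single_apply]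
    rw [pr, h0, sub_self]
    simpa [h0] using hg0 a (by simp [hab])

lemma compl_nonempty (hab : a ≤ b)
    (hE : E = {x : EuclideanSpace ℝ (Fin n) |
      x 0 ∈ Set.Icc a b ∧ ‖x - x 0 • EuclideanSpace.single (0 : Fin n) (1:ℝ)‖ ≤ g (x 0)}) :
    Eᶜ.Nonempty := by
  refine ⟨(b+1) • EuclideanSpace.single (0 : Fin n) (1:ℝ), fun hmem => ?_⟩
  have h0 : ((b+1) • EuclideanSpace.single (0 : Fin n) (1:ℝ) : EuclideanSpace ℝ (Fin n)) 0
      = b + 1 := by simp [PiLp.smul_apply, EuclideanSpace.single_apply]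
  have := ((mem_E hE _).1 hmem).1
  rw [h0] at this
  have := this.2
  linarith

lemma isClosed_E (hab : a ≤ b) (hgc : ContinuousOn g (Icc a b))
    (hE : E = {x : EuclideanSpace ℝ (Fin n) |
      x 0 ∈ Set.Icc a b ∧ ‖x - x 0 • EuclideanSpace.single (0 : Fin n) (1:ℝ)‖ ≤ g (x 0)}) :
    IsClosed E := by
  have hEeq : E = ((fun z : EuclideanSpace ℝ (Fin n) => z 0) ⁻¹' Icc a b) ∩
      {z : EuclideanSpace ℝ (Fin n) | ‖pr z‖ - Gx a b hab g (z 0) ≤ 0} := by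
    ext z
    rw [mem_E hE]
    constructor
    · rintro ⟨h1, h2⟩
      exact ⟨h1, by simp only [mem_setOf_eq, Gx_eq hab h1]; linarith⟩
    · rintro ⟨h1, h2⟩
      simp only [mem_setOf_eq, Gx_eq hab (by exact h1)] at h2
      exact ⟨h1, by linarith⟩
  rw [hEeq]
  refine (isClosed_Icc.preimage cont_coord).inter ?_
  have hf : Continuous fun z : EuclideanSpace ℝ (Fin n) =>
      ‖pr z‖ - Gx a b hab g (z 0) :=
    (cont_pr.norm).sub ((Gx_cont hab hgc).comp cont_coord)
  exact isClosed_le hf continuous_const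


lemma infDist_le_radial (h01 : (1 : Fin n) ≠ 0) (T : Set (EuclideanSpace ℝ (Fin n)))
    (hT : ∀ w ∈ T, ∀ q : EuclideanSpace ℝ (Fin n), q 0 = w 0 → ‖pr q‖ = ‖pr w‖ → q ∈ T)
    (hTne : T.Nonempty) (z z' : EuclideanSpace ℝ (Fin n))
    (h0 : z 0 = z' 0) (hr : ‖pr z‖ = ‖pr z'‖) : infDist z T ≤ infDist z' T := by
  by_contra hcon
  push_neg at hcon
  obtain ⟨p, hp, hlt⟩ := (infDist_lt_iff hTne).1 hcon
  set u : EuclideanSpace ℝ (Fin n) :=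
    if pr z = 0 then EuclideanSpace.single (1 : Fin n) (1:ℝ) else ‖pr z‖⁻¹ • pr z with hu
  have hu0 : u 0 = 0 := by
    rw [hu]; split
    · simp only [EuclideanSpace.single_apply]
      rw [if_neg (Ne.symm h01)]
    · simp [PiLp.smul_apply, pr_apply_zero]
  have hun : ‖u‖ = 1 := by
    rw [hu]; split
    · rw [EuclideanSpace.norm_single]; norm_num
    · rename_i h; exact norm_smul_inv_norm h
  have hzu : pr z = ‖pr z‖ • u := by
    rw [hu]; split
    · rename_i h; rw [h]; simp
    · rename_i h
      rw [smul_smul, mul_inv_cancel₀ (norm_ne_zero_iff.2 h), one_smul]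
  set q : EuclideanSpace ℝ (Fin n) :=
    p 0 • EuclideanSpace.single (0 : Fin n) (1:ℝ) + ‖pr p‖ • u with hq
  have hq0 : q 0 = p 0 := by
    rw [hq]
    simp [PiLp.add_apply, PiLp.smul_apply, EuclideanSpace.single_apply, hu0]
  have hprq : pr q = ‖pr p‖ • u := by
    rw [pr, hq0, hq]
    exact add_sub_cancel_left _ _
  have hnq : ‖pr q‖ = ‖pr p‖ := by
    rw [hprq, norm_smul, hun, mul_one, Real.norm_eq_abs, abs_of_nonneg (norm_nonneg _)]
  have hqT : q ∈ T := hT p hp q hq0 hnq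
  have hdist : dist z q ≤ dist z' p := by
    refine aux_le_of_sq dist_nonneg ?_
    rw [dist_eq_norm, dist_eq_norm, norm_sq_split z q, norm_sq_split z' p, hq0, hprq, h0]
    have h1 : pr z - ‖pr p‖ • u = (‖pr z‖ - ‖pr p‖) • u := by rw [sub_smul, ← hzu]
    have h1' : ‖pr z - ‖pr p‖ • u‖ = |‖pr z‖ - ‖pr p‖| := by
      rw [h1, norm_smul, hun, mul_one, Real.norm_eq_abs]
    have h2 : |‖pr z'‖ - ‖pr p‖| ≤ ‖pr z' - pr p‖ := abs_norm_sub_norm_le _ _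
    rw [h1', hr]
    nlinarith [sq_abs (‖pr z'‖ - ‖pr p‖), abs_nonneg (‖pr z'‖ - ‖pr p‖),
      norm_nonneg (pr z' - pr p)]
  have h3 : infDist z T ≤ dist z q := infDist_le_dist_of_mem hqT
  linarith

lemma sdist_eq_radial (h01 : (1 : Fin n) ≠ 0) (hab : a ≤ b)
    (hg0 : ∀ t ∈ Set.Icc a b, 0 ≤ g t)
    (hE : E = {x : EuclideanSpace ℝ (Fin n) |
      x 0 ∈ Set.Icc a b ∧ ‖x - x 0 • EuclideanSpace.single (0 : Fin n) (1:ℝ)‖ ≤ g (x 0)})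
    (z z' : EuclideanSpace ℝ (Fin n)) (h0 : z 0 = z' 0) (hr : ‖pr z‖ = ‖pr z'‖) :
    sdist E z = sdist E z' := by
  have hTE : ∀ w ∈ E, ∀ q : EuclideanSpace ℝ (Fin n), q 0 = w 0 → ‖pr q‖ = ‖pr w‖ → q ∈ E := by
    intro w hw q h1 h2
    rw [mem_E hE] at hw ⊢
    rw [h1, h2]; exact hw
  have hTEc : ∀ w ∈ Eᶜ, ∀ q : EuclideanSpace ℝ (Fin n), q 0 = w 0 → ‖pr q‖ = ‖pr w‖ → q ∈ Eᶜ := by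
    intro w hw q h1 h2 hq
    apply hw
    rw [mem_E hE] at hq ⊢
    rw [← h1, ← h2]; exact hq
  have hmem : z ∈ E ↔ z' ∈ E := by rw [mem_E hE, mem_E hE, h0, hr]
  have hiE : infDist z E = infDist z' E :=
    le_antisymm (infDist_le_radial h01 E hTE (E_nonempty hab hg0 hE) z z' h0 hr)
      (infDist_le_radial h01 E hTE (E_nonempty hab hg0 hE) z' z h0.symm hr.symm)
  have hiEc : infDist z Eᶜ = infDist z' Eᶜ :=
    le_antisymm (infDist_le_radial h01 Eᶜ hTEc (compl_nonempty hab hE) z z' h0 hr)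
      (infDist_le_radial h01 Eᶜ hTEc (compl_nonempty hab hE) z' z h0.symm hr.symm)
  by_cases hz : z ∈ E
  · rw [sdist, sdist, if_pos hz, if_pos (hmem.1 hz), hiEc]
  · rw [sdist, sdist, if_neg hz, if_neg (fun h => hz (hmem.2 h)), hiE]


lemma infDist_compl_pos (hab : a < b) (hgc : ContinuousOn g (Icc a b))
    (hE : E = {x : EuclideanSpace ℝ (Fin n) |
      x 0 ∈ Set.Icc a b ∧ ‖x - x 0 • EuclideanSpace.single (0 : Fin n) (1:ℝ)‖ ≤ g (x 0)})
    (z : EuclideanSpace ℝ (Fin n)) (h1 : z 0 ∈ Ioo a b) (h2 : ‖pr z‖ < g (z 0)) :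
    0 < infDist z Eᶜ := by
  set c := z 0 with hc
  set r := ‖pr z‖ with hrr
  have hcI : c ∈ Icc a b := Ioo_subset_Icc_self h1
  have hG : Gx a b hab.le g c = g c := Gx_eq hab.le hcI
  set r' := (r + g c)/2 with hr'def
  have hr'1 : r < r' := by rw [hr'def]; linarith
  have hr'2 : r' < g c := by rw [hr'def]; linarith
  have hopen : IsOpen ((Gx a b hab.le g) ⁻¹' Ioi r') :=
    isOpen_Ioi.preimage (Gx_cont hab.le hgc)
  have hcmem : c ∈ (Gx a b hab.le g) ⁻¹' Ioi r' := by
    simp only [mem_preimage, mem_Ioi, hG]; linarith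
  obtain ⟨δ1, hδ1pos, hδ1⟩ := Metric.isOpen_iff.1 hopen c hcmem
  obtain ⟨δ2, hδ2pos, hδ2⟩ := Metric.isOpen_iff.1 isOpen_Ioo c h1
  set ε := min (min δ1 δ2) (r' - r) with hε
  have hεpos : 0 < ε := by
    rw [hε]
    exact lt_min (lt_min hδ1pos hδ2pos) (by linarith)
  by_contra hcon
  push_neg at hcon
  have h0 : infDist z Eᶜ < ε := lt_of_le_of_lt (le_antisymm hcon infDist_nonneg).le hεpos
  obtain ⟨w, hw, hdw⟩ := (infDist_lt_iff (compl_nonempty hab.le hE)).1 h0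
  have hwc : |w 0 - c| < ε := by
    have h3 := abs_coord_le z w
    rw [← dist_eq_norm] at h3
    rw [abs_sub_comm, hc]
    linarith
  have hw0 : w 0 ∈ Ioo a b := by
    refine hδ2 ?_
    rw [mem_ball, Real.dist_eq]
    calc |w 0 - c| < ε := hwc
    _ ≤ δ2 := le_trans (min_le_left _ _) (min_le_right _ _)
  have hGw : r' < Gx a b hab.le g (w 0) := by
    have := hδ1 (show w 0 ∈ ball c δ1 by
      rw [mem_ball, Real.dist_eq]
      calc |w 0 - c| < ε := hwc
      _ ≤ δ1 := le_trans (min_le_left _ _) (min_le_left _ _))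
    simpa using this
  have hprw : ‖pr w‖ < r' := by
    have h4 : ‖pr w - pr z‖ ≤ ‖w - z‖ := norm_pr_sub_le w z
    have h5 : ‖pr w‖ ≤ ‖pr z‖ + ‖pr w - pr z‖ := by
      have := norm_sub_norm_le (pr w) (pr z)
      linarith
    have h6 : ‖w - z‖ < ε := by rw [← dist_eq_norm, dist_comm]; exact hdw
    have h7 : ε ≤ r' - r := min_le_right _ _
    have h8 : ‖pr z‖ = r := hrr.symm
    linarith
  apply hw
  rw [mem_E hE]
  refine ⟨Ioo_subset_Icc_self hw0, ?_⟩
  have := Gx_eq (g := g) hab.le (Ioo_subset_Icc_self hw0)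
  show ‖pr w‖ ≤ g (w 0)
  rw [← this]
  linarith

lemma pt_mem_closure_compl (h01 : (1 : Fin n) ≠ 0)
    (hE : E = {x : EuclideanSpace ℝ (Fin n) |
      x 0 ∈ Set.Icc a b ∧ ‖x - x 0 • EuclideanSpace.single (0 : Fin n) (1:ℝ)‖ ≤ g (x 0)})
    (t ρ : ℝ) (hρ : 0 ≤ ρ) (h : t ∉ Icc a b ∨ g t ≤ ρ) :
    (pt t ρ : EuclideanSpace ℝ (Fin n)) ∈ closure Eᶜ := by
  by_cases htI : t ∈ Icc a b
  · have hgt : g t ≤ ρ := by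
      rcases h with h | h
      · exact absurd htI h
      · exact h
    rw [Metric.mem_closure_iff]
    intro ε hε
    refine ⟨pt t (ρ + ε/2), ?_, ?_⟩
    · intro hmem
      have h5 := ((mem_E hE _).1 hmem).2
      rw [norm_pr_pt h01, pt_zero h01, abs_of_nonneg (by linarith)] at h5
      linarith
    · refine aux_lt_of_sq hε.le ?_
      rw [dist_pt_sq h01]
      nlinarith
  · refine subset_closure (fun hmem => htI ?_)
    have h5 := ((mem_E hE _).1 hmem).1
    rwa [pt_zero h01] at h5


set_option maxHeartbeats 1600000 in
lemma sdist_strict (h01 : (1 : Fin n) ≠ 0) (hab : a < b)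
    (hgc : ContinuousOn g (Icc a b)) (hg0 : ∀ t ∈ Set.Icc a b, 0 ≤ g t)
    (hga : g a = 0) (hgb : g b = 0)
    (hE : E = {x : EuclideanSpace ℝ (Fin n) |
      x 0 ∈ Set.Icc a b ∧ ‖x - x 0 • EuclideanSpace.single (0 : Fin n) (1:ℝ)‖ ≤ g (x 0)})
    (c r s : ℝ) (hr0 : 0 ≤ r) (hrs : r < s) :
    sdist E (pt c r) < sdist E (pt c s) := by
  have hs0 : 0 < s := lt_of_le_of_lt hr0 hrs
  have hx0 : (pt c r : EuclideanSpace ℝ (Fin n)) 0 = c := pt_zero h01 c r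
  have hy0 : (pt c s : EuclideanSpace ℝ (Fin n)) 0 = c := pt_zero h01 c s
  have hxr : ‖pr (pt c r : EuclideanSpace ℝ (Fin n))‖ = r := by
    rw [norm_pr_pt h01, abs_of_nonneg hr0]
  have hys : ‖pr (pt c s : EuclideanSpace ℝ (Fin n))‖ = s := by
    rw [norm_pr_pt h01, abs_of_nonneg hs0.le]
  by_cases hyE : (pt c s : EuclideanSpace ℝ (Fin n)) ∈ E
  · -- CASE 1 : both points in E
    obtain ⟨hcI0, hsgc0⟩ := (mem_E hE _).1 hyE
    rw [hy0] at hcI0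
    rw [hys, hy0] at hsgc0
    have hca : c ≠ a := fun h => by rw [h, hga] at hsgc0; linarith
    have hcb : c ≠ b := fun h => by rw [h, hgb] at hsgc0; linarith
    have hcIoo : c ∈ Ioo a b :=
      ⟨lt_of_le_of_ne hcI0.1 (Ne.symm hca), lt_of_le_of_ne hcI0.2 hcb⟩
    have hxE : (pt c r : EuclideanSpace ℝ (Fin n)) ∈ E := by
      rw [mem_E hE]
      exact ⟨by rwa [hx0], by rw [hxr, hx0]; linarith⟩
    have hdx : 0 < infDist (pt c r : EuclideanSpace ℝ (Fin n)) Eᶜ :=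
      infDist_compl_pos hab hgc hE _ (by rwa [hx0]) (by rw [hxr, hx0]; linarith)
    have hSne : (closure Eᶜ).Nonempty := (compl_nonempty hab.le hE).closure
    obtain ⟨p, hpS, hpd⟩ :=
      isClosed_closure.exists_infDist_eq_dist hSne (pt c r : EuclideanSpace ℝ (Fin n))
    rw [infDist_closure] at hpd
    set t := p 0 with ht
    set ρ := ‖pr p‖ with hρ
    have hρ0 : 0 ≤ ρ := norm_nonneg _
    have hlow : (c - t)^2 + (r - ρ)^2 ≤ (dist (pt c r : EuclideanSpace ℝ (Fin n)) p)^2 := by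
      rw [dist_eq_norm, norm_sq_split _ p, hx0]
      have h6 := abs_norm_sub_norm_le (pr (pt c r : EuclideanSpace ℝ (Fin n))) (pr p)
      rw [hxr] at h6
      nlinarith [sq_abs (r - ρ), abs_nonneg (r - ρ),
        norm_nonneg (pr (pt c r : EuclideanSpace ℝ (Fin n)) - pr p)]
    have hprop : t ∉ Icc a b ∨ g t ≤ ρ := by
      by_contra hcon
      push_neg at hcon
      obtain ⟨htI, hgtρ⟩ := hcon
      have hta : t ≠ a := fun h => by rw [h, hga] at hgtρ; linarith
      have htb : t ≠ b := fun h => by rw [h, hgb] at hgtρ; linarith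
      have htIoo : t ∈ Ioo a b :=
        ⟨lt_of_le_of_ne htI.1 (Ne.symm hta), lt_of_le_of_ne htI.2 htb⟩
      have h7 := infDist_compl_pos hab hgc hE p htIoo hgtρ
      have h8 := infDist_zero_of_mem_closure hpS
      linarith
    rw [sdist, sdist, if_pos hxE, if_pos hyE, neg_lt_neg_iff, hpd]
    have key : ∃ w ∈ closure Eᶜ,
        dist (pt c s : EuclideanSpace ℝ (Fin n)) w
          < dist (pt c r : EuclideanSpace ℝ (Fin n)) p := by
      by_cases hρs : s ≤ ρ
      · refine ⟨pt t ρ, pt_mem_closure_compl h01 hE t ρ hρ0 hprop,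
          aux_lt_of_sq dist_nonneg ?_⟩
        rw [dist_pt_sq h01]
        nlinarith
      · push_neg at hρs
        by_cases hρr : ρ = r
        · have htc : t ≠ c := by
            intro htc
            rcases hprop with h | h
            · exact h (htc ▸ hcI0)
            · rw [htc, hρr] at h; linarith
          by_cases htI : t ∈ Icc a b
          · have hgtr : g t ≤ r := by
              rcases hprop with h | h
              · exact absurd htI h
              · rwa [hρr] at h
            have hGt : Gx a b hab.le g t = g t := Gx_eq hab.le htI
            have hopen : IsOpen ((Gx a b hab.le g) ⁻¹' Iio s) :=
              isOpen_Iio.preimage (Gx_cont hab.le hgc)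
            have htmem : t ∈ (Gx a b hab.le g) ⁻¹' Iio s := by
              simp only [mem_preimage, mem_Iio, hGt]; linarith
            obtain ⟨δ, hδpos, hδ⟩ := Metric.isOpen_iff.1 hopen t htmem
            rcases lt_or_gt_of_ne htc with hlt | hgt
            · set t' := t + min (δ/2) ((c - t)/2) with ht'
              have hm1 : 0 < min (δ/2) ((c - t)/2) := lt_min (by linarith) (by linarith)
              have h1 : t < t' := by rw [ht']; linarith
              have h2 : t' < c := by
                have := min_le_right (δ/2) ((c - t)/2)
                rw [ht']; linarith
              have ht'I : t' ∈ Icc a b := ⟨le_trans htI.1 h1.le, le_trans h2.le hcI0.2⟩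
              have hgt' : g t' < s := by
                have h3 : t' ∈ ball t δ := by
                  rw [mem_ball, Real.dist_eq, ht', add_sub_cancel_left,
                    abs_of_nonneg hm1.le]
                  have := min_le_left (δ/2) ((c - t)/2)
                  linarith
                have h4 := hδ h3
                rwa [mem_preimage, mem_Iio, Gx_eq hab.le ht'I] at h4
              refine ⟨pt t' s, subset_closure (fun hmem => ?_), aux_lt_of_sq dist_nonneg ?_⟩
              · have h5 := ((mem_E hE _).1 hmem).2
                rw [norm_pr_pt h01, pt_zero h01, abs_of_nonneg hs0.le] at h5
                linarith
              · rw [dist_pt_sq h01]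
                rw [hρr] at hlow
                nlinarith
            · set t' := t - min (δ/2) ((t - c)/2) with ht'
              have hm1 : 0 < min (δ/2) ((t - c)/2) := lt_min (by linarith) (by linarith)
              have h1 : t' < t := by rw [ht']; linarith
              have h2 : c < t' := by
                have := min_le_right (δ/2) ((t - c)/2)
                rw [ht']; linarith
              have ht'I : t' ∈ Icc a b := ⟨le_trans hcI0.1 h2.le, le_trans h1.le htI.2⟩
              have hgt' : g t' < s := by
                have h3 : t' ∈ ball t δ := by
                  rw [mem_ball, Real.dist_eq, ht']
                  rw [show t - min (δ/2) ((t - c)/2) - t = -(min (δ/2) ((t - c)/2)) by ring,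
                    abs_neg, abs_of_nonneg hm1.le]
                  have := min_le_left (δ/2) ((t - c)/2)
                  linarith
                have h4 := hδ h3
                rwa [mem_preimage, mem_Iio, Gx_eq hab.le ht'I] at h4
              refine ⟨pt t' s, subset_closure (fun hmem => ?_), aux_lt_of_sq dist_nonneg ?_⟩
              · have h5 := ((mem_E hE _).1 hmem).2
                rw [norm_pr_pt h01, pt_zero h01, abs_of_nonneg hs0.le] at h5
                linarith
              · rw [dist_pt_sq h01]
                rw [hρr] at hlow
                nlinarith
          · rw [mem_Icc] at htI
            push_neg at htI
            rcases lt_or_ge t a with hta | hta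
            · refine ⟨pt a s, pt_mem_closure_compl h01 hE a s hs0.le
                (Or.inr (by rw [hga]; exact hs0.le)), aux_lt_of_sq dist_nonneg ?_⟩
              rw [dist_pt_sq h01]
              rw [hρr] at hlow
              have hac : a < c := hcIoo.1
              nlinarith
            · have htb : b < t := htI hta
              refine ⟨pt b s, pt_mem_closure_compl h01 hE b s hs0.le
                (Or.inr (by rw [hgb]; exact hs0.le)), aux_lt_of_sq dist_nonneg ?_⟩
              rw [dist_pt_sq h01]
              rw [hρr] at hlow
              have hcb' : c < b := hcIoo.2
              nlinarith
        · have hw : (pt t s : EuclideanSpace ℝ (Fin n)) ∈ closure Eᶜ := by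
            refine pt_mem_closure_compl h01 hE t s hs0.le ?_
            rcases hprop with h | h
            · exact Or.inl h
            · exact Or.inr (by linarith)
          refine ⟨pt t s, hw, aux_lt_of_sq dist_nonneg ?_⟩
          rw [dist_pt_sq h01]
          have h9 : (r - ρ)^2 > 0 := by
            have : r - ρ ≠ 0 := fun h => hρr (by linarith [sub_eq_zero.1 h])
            positivity
          nlinarith
    obtain ⟨w, hwS, hwd⟩ := key
    calc infDist (pt c s : EuclideanSpace ℝ (Fin n)) Eᶜ
        = infDist (pt c s : EuclideanSpace ℝ (Fin n)) (closure Eᶜ) := infDist_closure.symm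
      _ ≤ dist (pt c s : EuclideanSpace ℝ (Fin n)) w := infDist_le_dist_of_mem hwS
      _ < dist (pt c r : EuclideanSpace ℝ (Fin n)) p := hwd
  · by_cases hxE : (pt c r : EuclideanSpace ℝ (Fin n)) ∈ E
    · -- CASE 2 : x in E, y not
      rw [sdist, sdist, if_pos hxE, if_neg hyE]
      have h1 : 0 < infDist (pt c s : EuclideanSpace ℝ (Fin n)) E :=
        ((isClosed_E hab.le hgc hE).notMem_iff_infDist_pos
          (E_nonempty hab.le hg0 hE)).1 hyE
      have h2 : (0:ℝ) ≤ infDist (pt c r : EuclideanSpace ℝ (Fin n)) Eᶜ := infDist_nonneg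
      linarith
    · -- CASE 3 : both outside E
      rw [sdist, sdist, if_neg hxE, if_neg hyE]
      obtain ⟨p, hpE, hpd⟩ := (isClosed_E hab.le hgc hE).exists_infDist_eq_dist
        (E_nonempty hab.le hg0 hE) (pt c s : EuclideanSpace ℝ (Fin n))
      set t := p 0 with ht
      set ρ := ‖pr p‖ with hρ
      have hρ0 : 0 ≤ ρ := norm_nonneg _
      obtain ⟨htI, hρg⟩ := (mem_E hE p).1 hpE
      have hlow : (c - t)^2 + (s - ρ)^2 ≤ (dist (pt c s : EuclideanSpace ℝ (Fin n)) p)^2 := by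
        rw [dist_eq_norm, norm_sq_split _ p, hy0]
        have h6 := abs_norm_sub_norm_le (pr (pt c s : EuclideanSpace ℝ (Fin n))) (pr p)
        rw [hys] at h6
        nlinarith [sq_abs (s - ρ), abs_nonneg (s - ρ),
          norm_nonneg (pr (pt c s : EuclideanSpace ℝ (Fin n)) - pr p)]
      have key : ∃ q ∈ E, dist (pt c r : EuclideanSpace ℝ (Fin n)) q
          < dist (pt c s : EuclideanSpace ℝ (Fin n)) p := by
        by_cases hρr : ρ ≤ r
        · refine ⟨pt t ρ, (mem_E hE _).2 ⟨by rwa [pt_zero h01],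
            by rw [norm_pr_pt h01, pt_zero h01, abs_of_nonneg hρ0]; exact hρg⟩,
            aux_lt_of_sq dist_nonneg ?_⟩
          rw [dist_pt_sq h01]
          nlinarith
        · push_neg at hρr
          by_cases hρs : ρ = s
          · have htc : t ≠ c := by
              intro h
              apply hyE
              rw [mem_E hE]
              exact ⟨by rw [hy0, ← h]; exact htI, by rw [hys, hy0, ← h, ← hρs]; exact hρg⟩
            have hgts : s ≤ g t := hρs ▸ hρg
            have hta : t ≠ a := fun h => by rw [h, hga] at hgts; linarith
            have htb : t ≠ b := fun h => by rw [h, hgb] at hgts; linarith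
            have htIoo : t ∈ Ioo a b :=
              ⟨lt_of_le_of_ne htI.1 (Ne.symm hta), lt_of_le_of_ne htI.2 htb⟩
            have hGt : Gx a b hab.le g t = g t := Gx_eq hab.le htI
            have hopen : IsOpen ((Gx a b hab.le g) ⁻¹' Ioi r) :=
              isOpen_Ioi.preimage (Gx_cont hab.le hgc)
            have htmem : t ∈ (Gx a b hab.le g) ⁻¹' Ioi r := by
              simp only [mem_preimage, mem_Ioi, hGt]; linarith
            obtain ⟨δ, hδpos, hδ⟩ := Metric.isOpen_iff.1 hopen t htmem
            rcases lt_or_gt_of_ne htc with hlt | hgt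
            · set t' := t + min (min (δ/2) ((c - t)/2)) ((b - t)/2) with ht'
              have hm1 : 0 < min (min (δ/2) ((c - t)/2)) ((b - t)/2) :=
                lt_min (lt_min (by linarith) (by linarith)) (by linarith [htIoo.2])
              have h1 : t < t' := by rw [ht']; linarith
              have h2 : t' < c := by
                have h2a := min_le_left (min (δ/2) ((c - t)/2)) ((b - t)/2)
                have h2b := min_le_right (δ/2) ((c - t)/2)
                rw [ht']; linarith
              have h2' : t' < b := by
                have := min_le_right (min (δ/2) ((c - t)/2)) ((b - t)/2)
                rw [ht']; linarith
              have ht'I : t' ∈ Icc a b := ⟨le_trans htI.1 h1.le, h2'.le⟩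
              have hgt' : r < g t' := by
                have h3 : t' ∈ ball t δ := by
                  rw [mem_ball, Real.dist_eq, ht', add_sub_cancel_left,
                    abs_of_nonneg hm1.le]
                  have h3a := min_le_left (min (δ/2) ((c - t)/2)) ((b - t)/2)
                  have h3b := min_le_left (δ/2) ((c - t)/2)
                  linarith
                have h4 := hδ h3
                rwa [mem_preimage, mem_Ioi, Gx_eq hab.le ht'I] at h4
              refine ⟨pt t' r, (mem_E hE _).2 ⟨by rwa [pt_zero h01],
                by rw [norm_pr_pt h01, pt_zero h01, abs_of_nonneg hr0]; linarith⟩,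
                aux_lt_of_sq dist_nonneg ?_⟩
              rw [dist_pt_sq h01]
              have hz0 : (s - ρ)^2 = 0 := by rw [hρs]; ring
              have hsq : (c - t')^2 < (c - t)^2 := by nlinarith
              linarith
            · set t' := t - min (min (δ/2) ((t - c)/2)) ((t - a)/2) with ht'
              have hm1 : 0 < min (min (δ/2) ((t - c)/2)) ((t - a)/2) :=
                lt_min (lt_min (by linarith) (by linarith)) (by linarith [htIoo.1])
              have h1 : t' < t := by rw [ht']; linarith
              have h2 : c < t' := by
                have h2a := min_le_left (min (δ/2) ((t - c)/2)) ((t - a)/2)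
                have h2b := min_le_right (δ/2) ((t - c)/2)
                rw [ht']; linarith
              have h2' : a < t' := by
                have := min_le_right (min (δ/2) ((t - c)/2)) ((t - a)/2)
                rw [ht']; linarith
              have ht'I : t' ∈ Icc a b := ⟨h2'.le, le_trans h1.le htI.2⟩
              have hgt' : r < g t' := by
                have h3 : t' ∈ ball t δ := by
                  rw [mem_ball, Real.dist_eq, ht']
                  rw [show t - min (min (δ/2) ((t - c)/2)) ((t - a)/2) - t
                      = -(min (min (δ/2) ((t - c)/2)) ((t - a)/2)) by ring,
                    abs_neg, abs_of_nonneg hm1.le]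
                  have h3a := min_le_left (min (δ/2) ((t - c)/2)) ((t - a)/2)
                  have h3b := min_le_left (δ/2) ((t - c)/2)
                  linarith
                have h4 := hδ h3
                rwa [mem_preimage, mem_Ioi, Gx_eq hab.le ht'I] at h4
              refine ⟨pt t' r, (mem_E hE _).2 ⟨by rwa [pt_zero h01],
                by rw [norm_pr_pt h01, pt_zero h01, abs_of_nonneg hr0]; linarith⟩,
                aux_lt_of_sq dist_nonneg ?_⟩
              rw [dist_pt_sq h01]
              have hz0 : (s - ρ)^2 = 0 := by rw [hρs]; ring
              have hsq : (c - t')^2 < (c - t)^2 := by nlinarith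
              linarith
          · refine ⟨pt t r, (mem_E hE _).2 ⟨by rwa [pt_zero h01],
              by rw [norm_pr_pt h01, pt_zero h01, abs_of_nonneg hr0]; linarith⟩,
              aux_lt_of_sq dist_nonneg ?_⟩
            rw [dist_pt_sq h01]
            have h9 : (s - ρ)^2 > 0 := by
              have : s - ρ ≠ 0 := fun h => hρs (by linarith [sub_eq_zero.1 h])
              positivity
            nlinarith
      obtain ⟨q, hqE, hqd⟩ := key
      calc infDist (pt c r : EuclideanSpace ℝ (Fin n)) E
          ≤ dist (pt c r : EuclideanSpace ℝ (Fin n)) q := infDist_le_dist_of_mem hqE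
        _ < dist (pt c s : EuclideanSpace ℝ (Fin n)) p := hqd
        _ = infDist (pt c s : EuclideanSpace ℝ (Fin n)) E := hpd.symm

end Main
end SdistProof

/-- For a solid of revolution E = C(g,[a,b]) about the x₁-axis, generated
by a continuous nonnegative g vanishing at the endpoints, for every fixed first
coordinate the signed distance function, as a function of the remaining coordinates
x', is radially symmetric and strictly increasing in |x'|. -/
theorem sdist_section_radial_strictMono
    (n : ℕ) [NeZero n] (hn : 2 ≤ n) (a b : ℝ) (hab : a < b)
    (g : ℝ → ℝ) (hgc : ContinuousOn g (Set.Icc a b))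
    (hg0 : ∀ t ∈ Set.Icc a b, 0 ≤ g t) (hga : g a = 0) (hgb : g b = 0)
    (E : Set (EuclideanSpace ℝ (Fin n)))
    (hE : E = {x : EuclideanSpace ℝ (Fin n) |
      x 0 ∈ Set.Icc a b ∧ ‖x - x 0 • EuclideanSpace.single (0 : Fin n) (1:ℝ)‖ ≤ g (x 0)}) :
    ∀ x y : EuclideanSpace ℝ (Fin n), x 0 = y 0 →
      ((‖x - x 0 • EuclideanSpace.single (0 : Fin n) (1:ℝ)‖
          = ‖y - y 0 • EuclideanSpace.single (0 : Fin n) (1:ℝ)‖ → sdist E x = sdist E y) ∧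
       (‖x - x 0 • EuclideanSpace.single (0 : Fin n) (1:ℝ)‖
          < ‖y - y 0 • EuclideanSpace.single (0 : Fin n) (1:ℝ)‖ → sdist E x < sdist E y)) := by
  intro x y hxy
  have h01 : (1 : Fin n) ≠ 0 := SdistProof.fin_one_ne_zero hn
  constructor
  · intro hnorm
    exact SdistProof.sdist_eq_radial h01 hab.le hg0 hE x y hxy hnorm
  · intro hlt
    have hlt' : ‖SdistProof.pr x‖ < ‖SdistProof.pr y‖ := hlt
    have e1 : sdist E x = sdist E (SdistProof.pt (x 0) ‖SdistProof.pr x‖) := by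
      apply SdistProof.sdist_eq_radial h01 hab.le hg0 hE
      · rw [SdistProof.pt_zero h01]
      · rw [SdistProof.norm_pr_pt h01, abs_of_nonneg (norm_nonneg _)]
    have e2 : sdist E y = sdist E (SdistProof.pt (x 0) ‖SdistProof.pr y‖) := by
      apply SdistProof.sdist_eq_radial h01 hab.le hg0 hE
      · rw [SdistProof.pt_zero h01]; exact hxy.symm
      · rw [SdistProof.norm_pr_pt h01, abs_of_nonneg (norm_nonneg _)]
    rw [e1, e2]
    exact SdistProof.sdist_strict h01 hab hgc hg0 hga hgb hE (x 0) _ _ (norm_nonneg _) hlt'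
end

section
/- Fix r > 0 and h > 0, and set E = B(-r e₁, r) ∪ B(r e₁, r) ⊆ ℝⁿ (two tangent open balls of radius r meeting at the origin). Let τ ∈ (0, r/2] and suppose h is small enough that η h ≤ τ h^{1/2}/2 for a given η > 0. Then there exists a constant C = C(r) such that the signed distance function satisfies d̄_E(x) ≤ C τ² h^{1/2} for every x in the cylinder C(τ h^{1/4}, τ h^{1/2}) = {x : |x₁| ≤ τ h^{1/2}, |x'| ≤ τ h^{1/4}}. -/
open Set Metric Classical

lemma infDist_ball_le_aux {V : Type*} [NormedAddCommGroup V] [NormedSpace ℝ V]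
    (c x : V) (r : ℝ) (hr : 0 < r) (hd : r ≤ dist x c) :
    Metric.infDist x (Metric.ball c r) ≤ dist x c - r := by
  rw [← Metric.infDist_closure, closure_ball c hr.ne']
  have hd0 : (0:ℝ) < dist x c := lt_of_lt_of_le hr hd
  set d := dist x c with hdd
  have hdn : d = ‖x - c‖ := by rw [hdd, dist_eq_norm]
  have hy : c + (r/d) • (x - c) ∈ Metric.closedBall c r := by
    have : ‖c + (r/d) • (x - c) - c‖ = r := by
      rw [add_sub_cancel_left, norm_smul, ← hdn, Real.norm_eq_abs,
        abs_of_pos (div_pos hr hd0), div_mul_cancel₀ _ hd0.ne']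
    rw [Metric.mem_closedBall, dist_eq_norm]
    exact le_of_eq this
  refine le_trans (Metric.infDist_le_dist_of_mem hy) (le_of_eq ?_)
  have : x - (c + (r/d) • (x - c)) = (1 - r/d) • (x - c) := by
    rw [sub_smul, one_smul]; abel
  rw [dist_eq_norm, this, norm_smul, ← hdn, Real.norm_eq_abs]
  have h1 : (0:ℝ) ≤ 1 - r/d := by
    rw [sub_nonneg, div_le_one hd0]; exact hd
  rw [abs_of_nonneg h1]
  field_simp

set_option maxHeartbeats 1000000 in
/-- For E the union of two tangent open balls of radius r touching at the
origin, there is a constant C = C(r) such that for every τ ∈ (0, r/2], η > 0 and every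
small h with ηh ≤ τ h^{1/2}/2, the signed distance to E satisfies
d̄_E(x) ≤ C τ² h^{1/2} on the cylinder {|x₁| ≤ τ h^{1/2}, |x'| ≤ τ h^{1/4}}. -/
theorem sdist_bound_on_cylinder
    (n : ℕ) [NeZero n] (hn : 2 ≤ n) (r : ℝ) (hr : 0 < r) :
    ∃ C : ℝ, 0 < C ∧ ∀ η τ h : ℝ, 0 < η → 0 < τ → τ ≤ r / 2 → 0 < h → h ≤ 1 →
      η * h ≤ τ * h ^ ((1:ℝ)/2) / 2 →
      ∀ x : EuclideanSpace ℝ (Fin n),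
        |x 0| ≤ τ * h ^ ((1:ℝ)/2) →
        ‖x - x 0 • EuclideanSpace.single (0 : Fin n) (1:ℝ)‖ ≤ τ * h ^ ((1:ℝ)/4) →
        sdist (Metric.ball ((-r) • EuclideanSpace.single (0 : Fin n) (1:ℝ)) r
            ∪ Metric.ball (r • EuclideanSpace.single (0 : Fin n) (1:ℝ)) r) x
          ≤ C * τ^2 * h ^ ((1:ℝ)/2) := by
  refine ⟨1/r, by positivity, ?_⟩
  intro η τ h hη hτ hτr hh hh1 hηh x hx1 hx2
  set e : EuclideanSpace ℝ (Fin n) := EuclideanSpace.single (0 : Fin n) (1:ℝ) with he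
  set E := Metric.ball ((-r) • e) r ∪ Metric.ball (r • e) r with hE
  have hhalf : (0:ℝ) < h ^ ((1:ℝ)/2) := Real.rpow_pos_of_pos hh _
  have hRHS : (0:ℝ) ≤ 1/r * τ^2 * h ^ ((1:ℝ)/2) := by positivity
  by_cases hxE : x ∈ E
  · rw [sdist, if_pos hxE]
    exact le_trans (neg_nonpos_of_nonneg Metric.infDist_nonneg) hRHS
  rw [sdist, if_neg hxE]
  -- choose the center on the same side as x 0
  set s : ℝ := if 0 ≤ x 0 then r else -r with hs
  have hsub : Metric.ball (s • e) r ⊆ E := by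
    rw [hs]; split
    · exact subset_union_right
    · exact subset_union_left
  have hsE : x ∉ Metric.ball (s • e) r := fun hm => hxE (hsub hm)
  have hdist : r ≤ dist x (s • e) := by
    by_contra hlt
    exact hsE (Metric.mem_ball.mpr (lt_of_not_ge hlt))
  have hne : (Metric.ball (s • e) r).Nonempty := Metric.nonempty_ball.mpr hr
  have step1 : Metric.infDist x E ≤ Metric.infDist x (Metric.ball (s • e) r) :=
    Metric.infDist_le_infDist_of_subset hsub hne
  have step2 : Metric.infDist x (Metric.ball (s • e) r) ≤ dist x (s • e) - r :=
    infDist_ball_le_aux _ _ _ hr hdist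
  -- compute dist x (s • e) squared
  set v : EuclideanSpace ℝ (Fin n) := x - x 0 • e with hv
  have hdecomp : x - s • e = (x 0 - s) • e + v := by
    rw [hv, sub_smul]; abel
  have hv0 : v 0 = 0 := by
    rw [hv]
    have : (x - x 0 • e) 0 = x 0 - x 0 * e 0 := rfl
    rw [this, he, EuclideanSpace.single_apply, if_pos rfl, mul_one, sub_self]
  have hinner : (inner ℝ ((x 0 - s) • e) v : ℝ) = 0 := by
    rw [real_inner_smul_left, he, EuclideanSpace.inner_single_left]
    simp [hv0]
  have hnorme : ‖e‖ = 1 := by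
    rw [he, EuclideanSpace.norm_single]; norm_num
  have hsq : dist x (s • e) ^ 2 = (x 0 - s)^2 + ‖v‖^2 := by
    rw [dist_eq_norm, hdecomp, sq, norm_add_sq_eq_norm_sq_add_norm_sq_real hinner,
      norm_smul, hnorme, mul_one, Real.norm_eq_abs, ← sq, ← sq, sq_abs]
  -- bound d² - r²
  have habs : |x 0| ^ 2 - 2 * r * |x 0| + r^2 = (x 0 - s)^2 := by
    rw [hs]; split_ifs with h0
    · rw [abs_of_nonneg h0]; ring
    · rw [abs_of_neg (lt_of_not_ge h0)]; ring
  have hd2 : dist x (s • e) ^ 2 - r^2 ≤ (x 0)^2 + ‖v‖^2 := by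
    rw [hsq]
    have : (x 0 - s)^2 = (x 0)^2 - 2 * r * |x 0| + r^2 := by
      rw [← habs, sq_abs]
    nlinarith [abs_nonneg (x 0), hr.le]
  have hq : h ^ ((1:ℝ)/4) * h ^ ((1:ℝ)/4) = h ^ ((1:ℝ)/2) := by
    rw [← Real.rpow_add hh]; norm_num
  have hhh : h ≤ h ^ ((1:ℝ)/2) := by
    have h2 : h ^ ((1:ℝ)/2) * h ^ ((1:ℝ)/2) = h := by
      rw [← Real.rpow_add hh]; norm_num
    have hle1 : h ^ ((1:ℝ)/2) ≤ 1 := Real.rpow_le_one hh.le hh1 (by norm_num)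
    nlinarith
  have hb : (x 0)^2 + ‖v‖^2 ≤ 2 * τ^2 * h ^ ((1:ℝ)/2) := by
    have h1 : (x 0)^2 ≤ (τ * h ^ ((1:ℝ)/2))^2 := by
      rw [← sq_abs]; exact pow_le_pow_left₀ (abs_nonneg _) hx1 2
    have h2 : ‖v‖^2 ≤ (τ * h ^ ((1:ℝ)/4))^2 := pow_le_pow_left₀ (norm_nonneg _) hx2 2
    have h3 : (τ * h ^ ((1:ℝ)/4))^2 = τ^2 * h ^ ((1:ℝ)/2) := by
      rw [mul_pow, sq, sq, hq]
    have h4 : (τ * h ^ ((1:ℝ)/2))^2 ≤ τ^2 * h ^ ((1:ℝ)/2) := by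
      have h5 : (h ^ ((1:ℝ)/2))^2 = h := by
        rw [sq, ← Real.rpow_add hh]; norm_num
      rw [mul_pow, h5]
      exact mul_le_mul_of_nonneg_left hhh (by positivity)
    linarith
  -- final: d - r ≤ (d² - r²)/(2r) ≤ τ² √h / r
  have hdr : dist x (s • e) - r ≤ (dist x (s • e) ^ 2 - r^2) / (2*r) := by
    rw [le_div_iff₀ (by positivity : (0:ℝ) < 2*r)]
    nlinarith [hdist]
  calc Metric.infDist x E ≤ dist x (s • e) - r := le_trans step1 step2
    _ ≤ (dist x (s • e) ^ 2 - r^2) / (2*r) := hdr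
    _ ≤ (2 * τ^2 * h ^ ((1:ℝ)/2)) / (2*r) := by
        gcongr
        linarith [hd2, hb]
    _ = 1/r * τ^2 * h ^ ((1:ℝ)/2) := by field_simp
end

section
/- Let r > 0, η > 0, Λ₀ ≥ max{4η², 1}, α ∈ (0, r/4], and δ > 0 with δ ≤ min{Λ₀^{-2}, suitable smallness depending on r, η, α, Λ₀}. For 0 < h ≤ δ and integers i with 1 ≤ i ≤ ⌊δ/h⌋ + 1, define l_{h,i} = Λ₀ h(i-1) + α h^{1/4}, d_{h,i} = 2η h(i-1) + α h^{1/2}, r_{h,i} = r - η h i. Then r_{h,i}² - (r - d_{h,i})² ≥ l_{h,i}², and consequently the sets {x ∈ ℝⁿ : x₁ = ±d_{h,i}, |x'| ≤ l_{h,i}} are contained in closedBall(∓ r e₁, r_{h,i}) ∪ closedBall(± r e₁, r_{h,i}). -/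
open Set Metric RealInnerProductSpace

private lemma sqle_aux (a c : ℝ) (ha : 0 ≤ a) (hc : 0 ≤ c) (h : a^2 ≤ c^2) : a ≤ c := by
  nlinarith

private lemma key_ineq (r η Λ₀ α h a b m : ℝ) (hr : 0 < r) (hη : 0 < η) (hα : 0 < α)
    (hαr : α ≤ r / 4) (ha : 0 < a) (hb : 0 < b) (ha2 : a ^ 2 = h) (hb2 : b ^ 2 = a)
    (hm0 : 0 ≤ m) (hηh : η * h ≤ α * a / 2) (h3m : 3 * η * m ≤ r / 4)
    (haa : α * a ≤ r / 2) (hmΛ : 2 * Λ₀ ^ 2 * m ≤ r * η) :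
    (r - (η * m + η * h)) ^ 2 - (r - (2 * η * m + α * a)) ^ 2 ≥ (Λ₀ * m + α * b) ^ 2 := by
  have hηh4 : η * h ≤ r / 4 := by linarith
  have hF1 : (0:ℝ) ≤ η * m + α * a / 2 := by positivity
  have e : (r - (η * m + η * h)) ^ 2 - (r - (2 * η * m + α * a)) ^ 2
      = (η * m + α * a - η * h) * (2 * r - 3 * η * m - α * a - η * h) := by ring
  have hprod : (η * m + α * a / 2) * r
      ≤ (η * m + α * a - η * h) * (2 * r - 3 * η * m - α * a - η * h) := by
    apply mul_le_mul (by linarith) (by linarith) hr.le (by linarith)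
  have hrhs : (Λ₀ * m + α * b) ^ 2 ≤ 2 * Λ₀ ^ 2 * m ^ 2 + 2 * α ^ 2 * a := by
    nlinarith [sq_nonneg (Λ₀ * m - α * b)]
  have h1 : 2 * Λ₀ ^ 2 * m ^ 2 ≤ r * η * m := by nlinarith
  have h2 : 2 * α ^ 2 * a ≤ r * (α * a / 2) := by
    nlinarith [mul_nonneg (show (0:ℝ) ≤ r/2 - 2*α by linarith) (mul_pos hα ha).le]
  nlinarith [hprod, hrhs, h1, h2]

private lemma ball_step (n : ℕ) [NeZero n] (x : EuclideanSpace ℝ (Fin n)) (c ρ : ℝ) (hρ : 0 ≤ ρ)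
    (hl : ‖x - x 0 • EuclideanSpace.single (0 : Fin n) (1:ℝ)‖ ^ 2 + (x 0 - c) ^ 2 ≤ ρ ^ 2) :
    x ∈ Metric.closedBall (c • EuclideanSpace.single (0 : Fin n) (1:ℝ)) ρ := by
  set e : EuclideanSpace ℝ (Fin n) := EuclideanSpace.single (0 : Fin n) (1:ℝ) with he
  set y : EuclideanSpace ℝ (Fin n) := x - x 0 • e with hy
  have hy0 : y 0 = 0 := by
    simp [hy, he, EuclideanSpace.single_apply]
  have hdec : x - c • e = y + (x 0 - c) • e := by
    rw [hy]; module
  have hinner : (inner ℝ y ((x 0 - c) • e) : ℝ) = 0 := by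
    rw [real_inner_smul_right, he, EuclideanSpace.inner_single_right]
    simp [hy0]
  have hnsq : ‖x - c • e‖ ^ 2 = ‖y‖ ^ 2 + (x 0 - c) ^ 2 := by
    rw [hdec, @norm_add_sq_real, hinner, norm_smul, he, EuclideanSpace.norm_single]
    simp [mul_pow, sq_abs]
  have hle : ‖x - c • e‖ ^ 2 ≤ ρ ^ 2 := by rw [hnsq]; exact hl
  have : ‖x - c • e‖ ≤ ρ := sqle_aux _ _ (norm_nonneg _) hρ hle
  simpa [Metric.mem_closedBall, dist_eq_norm] using this

set_option maxHeartbeats 1000000 in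
/-- With l_{h,i} = Λ₀h(i-1) + αh^{1/4}, d_{h,i} = 2ηh(i-1) + αh^{1/2} and
r_{h,i} = r - ηhi, for δ small (and δ ≤ Λ₀^{-2}), all 0 < h ≤ δ and 1 ≤ i ≤ ⌊δ/h⌋ + 1
one has r_{h,i}² - (r - d_{h,i})² ≥ l_{h,i}², and hence the heads
{x₁ = ±d_{h,i}, |x'| ≤ l_{h,i}} are contained in closedBall(-r e₁, r_{h,i}) ∪
closedBall(r e₁, r_{h,i}). -/
theorem barrier_heads_in_balls
    (n : ℕ) [NeZero n] (hn : 2 ≤ n) (r η Λ₀ α : ℝ)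
    (hr : 0 < r) (hη : 0 < η) (hΛ1 : 1 ≤ Λ₀) (hΛη : 4 * η^2 ≤ Λ₀)
    (hα : 0 < α) (hαr : α ≤ r / 4) :
    ∃ δ : ℝ, 0 < δ ∧ δ ≤ Λ₀ ^ (-2 : ℝ) ∧
      ∀ h : ℝ, 0 < h → h ≤ δ → ∀ i : ℕ, 1 ≤ i → (i : ℝ) ≤ δ / h + 1 →
        ((r - η * h * i)^2 - (r - (2 * η * h * ((i:ℝ) - 1) + α * h ^ ((1:ℝ)/2)))^2
            ≥ (Λ₀ * h * ((i:ℝ) - 1) + α * h ^ ((1:ℝ)/4))^2) ∧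
        {x : EuclideanSpace ℝ (Fin n) |
            (x 0 = 2 * η * h * ((i:ℝ) - 1) + α * h ^ ((1:ℝ)/2) ∨
             x 0 = -(2 * η * h * ((i:ℝ) - 1) + α * h ^ ((1:ℝ)/2))) ∧
            ‖x - x 0 • EuclideanSpace.single (0 : Fin n) (1:ℝ)‖
              ≤ Λ₀ * h * ((i:ℝ) - 1) + α * h ^ ((1:ℝ)/4)}
          ⊆ Metric.closedBall ((-r) • EuclideanSpace.single (0 : Fin n) (1:ℝ)) (r - η * h * i)
            ∪ Metric.closedBall (r • EuclideanSpace.single (0 : Fin n) (1:ℝ)) (r - η * h * i) := by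
  have hΛ0 : (0:ℝ) < Λ₀ := lt_of_lt_of_le one_pos hΛ1
  refine ⟨min (Λ₀ ^ (-2 : ℝ)) (min ((α/(2*η))^2) (min ((r/(2*α))^2)
      (min (r/(12*η)) (r*η/(2*Λ₀^2))))), ?_, ?_, ?_⟩
  · positivity
  · exact min_le_left _ _
  intro h hh hhδ i hi1 hiδ
  set δ := min (Λ₀ ^ (-2 : ℝ)) (min ((α/(2*η))^2) (min ((r/(2*α))^2)
      (min (r/(12*η)) (r*η/(2*Λ₀^2))))) with hδdef
  have hδ1 : δ ≤ (α/(2*η))^2 := le_trans (min_le_right _ _) (min_le_left _ _)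
  have hδ2 : δ ≤ (r/(2*α))^2 :=
    le_trans (min_le_right _ _) (le_trans (min_le_right _ _) (min_le_left _ _))
  have hδ3 : δ ≤ r/(12*η) :=
    le_trans (min_le_right _ _) (le_trans (min_le_right _ _)
      (le_trans (min_le_right _ _) (min_le_left _ _)))
  have hδ4 : δ ≤ r*η/(2*Λ₀^2) :=
    le_trans (min_le_right _ _) (le_trans (min_le_right _ _)
      (le_trans (min_le_right _ _) (min_le_right _ _)))
  -- abbreviations
  set a := h ^ ((1:ℝ)/2) with hadef
  set b := h ^ ((1:ℝ)/4) with hbdef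
  have ha : 0 < a := Real.rpow_pos_of_pos hh _
  have hb : 0 < b := Real.rpow_pos_of_pos hh _
  have ha2 : a ^ 2 = h := by
    rw [hadef, ← Real.rpow_natCast (h ^ ((1:ℝ)/2)) 2, ← Real.rpow_mul hh.le]
    norm_num
  have hb2 : b ^ 2 = a := by
    rw [hbdef, hadef, ← Real.rpow_natCast (h ^ ((1:ℝ)/4)) 2, ← Real.rpow_mul hh.le]
    norm_num
  set m := h * ((i:ℝ) - 1) with hmdef
  have hk0 : (0:ℝ) ≤ (i:ℝ) - 1 := by
    have : (1:ℝ) ≤ (i:ℝ) := by exact_mod_cast hi1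
    linarith
  have hm0 : 0 ≤ m := mul_nonneg hh.le hk0
  have hmδ : m ≤ δ := by
    have : (i:ℝ) - 1 ≤ δ / h := by linarith
    calc m = ((i:ℝ) - 1) * h := by rw [hmdef]; ring
    _ ≤ (δ / h) * h := by apply mul_le_mul_of_nonneg_right this hh.le
    _ = δ := by field_simp
  -- smallness consequences
  have haα : a ≤ α/(2*η) := by
    apply sqle_aux _ _ ha.le (by positivity)
    rw [ha2]; exact le_trans hhδ hδ1
  have hηh : η * h ≤ α * a / 2 := by
    have h' : η * a ≤ α / 2 := by
      rw [le_div_iff₀ (by positivity)] at haα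
      nlinarith
    have h'' : η * a * a ≤ α / 2 * a := mul_le_mul_of_nonneg_right h' ha.le
    nlinarith [ha2]
  have har : a ≤ r/(2*α) := by
    apply sqle_aux _ _ ha.le (by positivity)
    rw [ha2]; exact le_trans hhδ hδ2
  have haa : α * a ≤ r / 2 := by
    rw [le_div_iff₀ (by positivity)] at har
    nlinarith
  have h3m : 3 * η * m ≤ r / 4 := by
    have : m ≤ r/(12*η) := le_trans hmδ hδ3
    rw [le_div_iff₀ (by positivity)] at this
    nlinarith
  have hmΛ : 2 * Λ₀ ^ 2 * m ≤ r * η := by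
    have : m ≤ r*η/(2*Λ₀^2) := le_trans hmδ hδ4
    rw [le_div_iff₀ (by positivity)] at this
    linarith
  have key := key_ineq r η Λ₀ α h a b m hr hη hα hαr ha hb ha2 hb2 hm0 hηh h3m haa hmΛ
  have hik : η * h * (i:ℝ) = η * m + η * h := by rw [hmdef]; ring
  constructor
  · have e1 : (r - η * h * (i:ℝ)) = (r - (η * m + η * h)) := by rw [hik]
    have e2 : 2 * η * h * ((i:ℝ) - 1) + α * a = 2 * η * m + α * a := by rw [hmdef]; ring
    have e3 : Λ₀ * h * ((i:ℝ) - 1) + α * b = Λ₀ * m + α * b := by rw [hmdef]; ring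
    rw [e1, e2, e3]
    exact key
  · intro x hx
    obtain ⟨hx1, hx2⟩ := hx
    have hl0 : 0 ≤ Λ₀ * h * ((i:ℝ) - 1) + α * b := le_trans (norm_nonneg _) hx2
    have hρ0 : 0 ≤ r - η * h * (i:ℝ) := by
      have hαa4 : α * a ≤ r / 2 := haa
      rw [hik]; nlinarith
    have hysq : ‖x - x 0 • EuclideanSpace.single (0 : Fin n) (1:ℝ)‖ ^ 2
        ≤ (Λ₀ * h * ((i:ℝ) - 1) + α * b) ^ 2 := by
      apply pow_le_pow_left₀ (norm_nonneg _) hx2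
    have hlm : (Λ₀ * h * ((i:ℝ) - 1) + α * b) ^ 2 = (Λ₀ * m + α * b) ^ 2 := by
      rw [hmdef]; ring
    rcases hx1 with hc | hc
    · -- x 0 = d : right ball
      right
      apply ball_step n x r (r - η * h * (i:ℝ)) hρ0
      have hcd : (x 0 - r) ^ 2 = (r - (2 * η * m + α * a)) ^ 2 := by
        rw [hc, hmdef]; ring
      rw [hcd]
      have : (r - η * h * (i:ℝ)) ^ 2 = (r - (η * m + η * h)) ^ 2 := by rw [hik]
      rw [this]
      linarith [hysq, hlm, key]
    · -- x 0 = -d : left ball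
      left
      apply ball_step n x (-r) (r - η * h * (i:ℝ)) hρ0
      have hcd : (x 0 - (-r)) ^ 2 = (r - (2 * η * m + α * a)) ^ 2 := by
        rw [hc, hmdef]; ring
      rw [hcd]
      have : (r - η * h * (i:ℝ)) ^ 2 = (r - (η * m + η * h)) ^ 2 := by rw [hik]
      rw [this]
      linarith [hysq, hlm, key]
end

section
/- Let n ≥ 3, Λ₀ ≥ 2⁹(n-2)², l > 0, d > 0 with Λ₀^{1/2} d ≤ l, a = Λ₀^{1/2}/l, and φ(t) = (a/2)(t² - d²) + l. Suppose 0 < τ and φ(z₁) - τ ≥ l/4 for some z₁ ∈ (-d,d). Then the quantity H = -a/(1 + (a z₁)²)^{3/2} + (n-2)/((φ(z₁) - τ)(1 + (a z₁)²)^{1/2}) satisfies H ≤ (2^{7/2}(n-2) - Λ₀^{1/2})/(2^{3/2} l) ≤ -Λ₀^{1/2}/(2^{5/2} l). -/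
open Set

lemma rpow_half_nat (k : ℕ) : (2:ℝ) ^ ((k:ℝ)/2) = (Real.sqrt 2)^k := by
  rw [Real.sqrt_eq_rpow, ← Real.rpow_natCast ((2:ℝ)^((1:ℝ)/2)) k,
    ← Real.rpow_mul (by norm_num)]
  ring_nf

set_option maxHeartbeats 1000000 in
/-- For n ≥ 3, Λ₀ ≥ 2⁹(n-2)², the parabola φ(t) = (a/2)(t²-d²)+l with
a = Λ₀^{1/2}/l and Λ₀^{1/2}d ≤ l, and any τ > 0, z₁ ∈ (-d,d) with φ(z₁) - τ ≥ l/4,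
the mean curvature expression
H = -a/(1+(az₁)²)^{3/2} + (n-2)/((φ(z₁)-τ)(1+(az₁)²)^{1/2}) satisfies
H ≤ (2^{7/2}(n-2) - Λ₀^{1/2})/(2^{3/2}l) ≤ -Λ₀^{1/2}/(2^{5/2}l). -/
theorem mean_curvature_of_neck_negative
    (n : ℕ) (hn : 3 ≤ n) (Λ₀ l d a τ z₁ : ℝ)
    (hΛ : 2^9 * ((n:ℝ) - 2)^2 ≤ Λ₀) (hl : 0 < l) (hd : 0 < d)
    (hdl : Real.sqrt Λ₀ * d ≤ l)
    (ha : a = Real.sqrt Λ₀ / l)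
    (φ : ℝ → ℝ) (hφ : φ = fun t => a / 2 * (t^2 - d^2) + l)
    (hτ : 0 < τ) (hz : z₁ ∈ Set.Ioo (-d) d) (hφτ : l / 4 ≤ φ z₁ - τ)
    (H : ℝ)
    (hH : H = -a / (1 + (a * z₁)^2) ^ ((3:ℝ)/2)
        + ((n:ℝ) - 2) / ((φ z₁ - τ) * (1 + (a * z₁)^2) ^ ((1:ℝ)/2))) :
    H ≤ ((2:ℝ) ^ ((7:ℝ)/2) * ((n:ℝ) - 2) - Real.sqrt Λ₀) / ((2:ℝ) ^ ((3:ℝ)/2) * l) ∧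
    ((2:ℝ) ^ ((7:ℝ)/2) * ((n:ℝ) - 2) - Real.sqrt Λ₀) / ((2:ℝ) ^ ((3:ℝ)/2) * l)
      ≤ -Real.sqrt Λ₀ / ((2:ℝ) ^ ((5:ℝ)/2) * l) := by
  set s := Real.sqrt Λ₀ with hsdef
  have hn2 : (1:ℝ) ≤ (n:ℝ) - 2 := by
    have : (3:ℝ) ≤ (n:ℝ) := by exact_mod_cast hn
    linarith
  have hΛpos : (0:ℝ) < Λ₀ := by nlinarith
  have hspos : 0 < s := Real.sqrt_pos.mpr hΛpos
  have h2sq : Real.sqrt 2 ^ 2 = 2 := Real.sq_sqrt (by norm_num)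
  have h2pos : (0:ℝ) < Real.sqrt 2 := Real.sqrt_pos.mpr (by norm_num)
  have hsge : 16 * Real.sqrt 2 * ((n:ℝ) - 2) ≤ s := by
    have h1 : Real.sqrt (2^9 * ((n:ℝ)-2)^2) ≤ s := Real.sqrt_le_sqrt hΛ
    have h2 : Real.sqrt (2^9 * ((n:ℝ)-2)^2) = 16 * Real.sqrt 2 * ((n:ℝ)-2) := by
      rw [show (2:ℝ)^9 * ((n:ℝ)-2)^2 = (16 * Real.sqrt 2 * ((n:ℝ)-2))^2 by
        linear_combination (-256 * ((n:ℝ)-2)^2) * h2sq]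
      exact Real.sqrt_sq (by positivity)
    linarith [h2 ▸ h1]
  have e32 : (2:ℝ) ^ ((3:ℝ)/2) = 2 * Real.sqrt 2 := by
    have := rpow_half_nat 3
    norm_num at this
    rw [this]; linear_combination Real.sqrt 2 * h2sq
  have e52 : (2:ℝ) ^ ((5:ℝ)/2) = 4 * Real.sqrt 2 := by
    have := rpow_half_nat 5
    norm_num at this
    rw [this]; linear_combination (Real.sqrt 2 * (Real.sqrt 2 ^ 2 + 2)) * h2sq
  have e72 : (2:ℝ) ^ ((7:ℝ)/2) = 8 * Real.sqrt 2 := by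
    have := rpow_half_nat 7
    norm_num at this
    rw [this]; linear_combination (Real.sqrt 2 * (Real.sqrt 2 ^ 4 + 2 * Real.sqrt 2 ^ 2 + 4)) * h2sq
  have ha0 : 0 ≤ a := by rw [ha]; positivity
  -- (a z₁)² ≤ 1
  have hz1 : z₁^2 ≤ d^2 := by nlinarith [hz.1, hz.2]
  have haz : (a * z₁)^2 ≤ 1 := by
    have h1 : (a*z₁)^2 ≤ (a*d)^2 := by nlinarith [sq_nonneg a]
    have h2 : (a*d)^2 ≤ 1 := by
      rw [ha]
      have hsd : 0 ≤ s * d := by positivity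
      have : s / l * d = s * d / l := by ring
      rw [this]
      rw [div_pow]
      rw [div_le_one (by positivity)]
      nlinarith
    linarith
  set u := 1 + (a*z₁)^2 with hu
  have hu1 : (1:ℝ) ≤ u := by nlinarith [sq_nonneg (a*z₁)]
  have hu2 : u ≤ 2 := by linarith
  have hu32 : u ^ ((3:ℝ)/2) ≤ (2:ℝ) ^ ((3:ℝ)/2) :=
    Real.rpow_le_rpow (by linarith) hu2 (by norm_num)
  have hu32pos : 0 < u ^ ((3:ℝ)/2) := Real.rpow_pos_of_pos (by linarith) _
  have hu12 : (1:ℝ) ≤ u ^ ((1:ℝ)/2) := Real.one_le_rpow hu1 (by norm_num)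
  have h32pos : (0:ℝ) < (2:ℝ) ^ ((3:ℝ)/2) := by rw [e32]; positivity
  -- term 1
  have hT1 : -a / u ^ ((3:ℝ)/2) ≤ -a / (2:ℝ) ^ ((3:ℝ)/2) := by
    rw [neg_div, neg_div, neg_le_neg_iff]
    exact div_le_div_of_nonneg_left ha0 hu32pos hu32
  -- term 2
  have hφτpos : 0 < φ z₁ - τ := by linarith
  have hT2 : ((n:ℝ)-2) / ((φ z₁ - τ) * u ^ ((1:ℝ)/2)) ≤ ((n:ℝ)-2) / (l/4) := by
    apply div_le_div_of_nonneg_left (by linarith) (by positivity)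
    nlinarith
  have key : -a / (2 * Real.sqrt 2) + ((n:ℝ)-2) / (l/4)
      = (8 * Real.sqrt 2 * ((n:ℝ) - 2) - s) / (2 * Real.sqrt 2 * l) := by
    rw [ha]
    field_simp
    ring
  constructor
  · rw [hH, e32, e72]
    rw [e32] at hT1
    linarith [hT1, hT2, key]
  · rw [e32, e52, e72]
    rw [div_le_div_iff₀ (by positivity) (by positivity)]
    have hfact : 16 * Real.sqrt 2 * ((n:ℝ)-2) * (Real.sqrt 2 * l) ≤ s * (Real.sqrt 2 * l) :=
      mul_le_mul_of_nonneg_right hsge (by positivity)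
    have hfact' : 32 * ((n:ℝ)-2) * l ≤ s * (Real.sqrt 2 * l) := by
      have : 16 * Real.sqrt 2 * ((n:ℝ)-2) * (Real.sqrt 2 * l) = 32 * ((n:ℝ)-2) * l := by
        linear_combination (16 * ((n:ℝ)-2) * l) * h2sq
      linarith [this ▸ hfact]
    nlinarith [hfact', h2sq, mul_nonneg (by linarith : (0:ℝ) ≤ (n:ℝ)-2) hl.le]
end

section
/- Let φ₁ : [-d₁, d₁] → ℝ and φ₂ : [-d₂, d₂] → ℝ be positive 1-Lipschitz functions with d₁ ≤ d₂, and let K₁ ⊇ K₂ be closed sets in ℝⁿ. Define G_j = C(φ_j, [-d_j, d_j]) ∪ K_j for j = 1,2. If |φ₂ - φ₁| ≤ M on [-d₁, d₁], φ₂ ≤ sup φ₁ + M, and d₂ - d₁ ≤ M, then every point of G₂ is within distance 2M of G₁ in the sense that d̄_{G₁}(x) ≤ 4M for all x ∈ G₂. -/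
open Set Metric Classical

lemma sdist_le_of_exists {n : ℕ} (E : Set (EuclideanSpace ℝ (Fin n)))
    (x : EuclideanSpace ℝ (Fin n)) (c : ℝ) (hc : 0 ≤ c)
    (h : ∃ y ∈ E, dist x y ≤ c) : sdist E x ≤ c := by
  unfold sdist
  split
  · have := Metric.infDist_nonneg (s := Eᶜ) (x := x)
    linarith
  · obtain ⟨y, hy, hxy⟩ := h
    exact le_trans (Metric.infDist_le_dist_of_mem hy) hxy

/-- For positive 1-Lipschitz φ₁ on [-d₁,d₁], φ₂ on [-d₂,d₂] with d₁ ≤ d₂,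
closed sets K₁ ⊇ K₂, G_j = C(φ_j,[-d_j,d_j]) ∪ K_j, if |φ₂ - φ₁| ≤ M on [-d₁,d₁],
φ₂ ≤ sup φ₁ + M and d₂ - d₁ ≤ M, then every point of G₂ satisfies d̄_{G₁} ≤ 4M. -/
theorem consecutive_barriers_close
    (n : ℕ) [NeZero n] (hn : 2 ≤ n) (d₁ d₂ M : ℝ)
    (hd1 : 0 < d₁) (hdd : d₁ ≤ d₂) (hM : 0 ≤ M)
    (φ₁ φ₂ : ℝ → ℝ)
    (h1L : LipschitzOnWith 1 φ₁ (Set.Icc (-d₁) d₁))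
    (h2L : LipschitzOnWith 1 φ₂ (Set.Icc (-d₂) d₂))
    (h1p : ∀ t ∈ Set.Icc (-d₁) d₁, 0 < φ₁ t)
    (h2p : ∀ t ∈ Set.Icc (-d₂) d₂, 0 < φ₂ t)
    (K₁ K₂ : Set (EuclideanSpace ℝ (Fin n)))
    (hK1 : IsClosed K₁) (hK2 : IsClosed K₂) (hKsub : K₂ ⊆ K₁)
    (hdiff : ∀ t ∈ Set.Icc (-d₁) d₁, |φ₂ t - φ₁ t| ≤ M)
    (hsup : ∀ t ∈ Set.Icc (-d₂) d₂, φ₂ t ≤ sSup (φ₁ '' Set.Icc (-d₁) d₁) + M)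
    (hd : d₂ - d₁ ≤ M) :
    ∀ x ∈ ({z : EuclideanSpace ℝ (Fin n) | z 0 ∈ Set.Icc (-d₂) d₂ ∧
        ‖z - z 0 • EuclideanSpace.single (0 : Fin n) (1:ℝ)‖ ≤ φ₂ (z 0)} ∪ K₂),
      sdist ({z : EuclideanSpace ℝ (Fin n) | z 0 ∈ Set.Icc (-d₁) d₁ ∧
        ‖z - z 0 • EuclideanSpace.single (0 : Fin n) (1:ℝ)‖ ≤ φ₁ (z 0)} ∪ K₁) x
        ≤ 4 * M := by
  intro x hx
  apply sdist_le_of_exists _ _ _ (by linarith)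
  rcases hx with hx | hx
  swap
  · exact ⟨x, Or.inr (hKsub hx), by rw [dist_self]; positivity⟩
  obtain ⟨⟨ht1, ht2⟩, hr⟩ := hx
  set e₀ : EuclideanSpace ℝ (Fin n) := EuclideanSpace.single (0 : Fin n) (1:ℝ) with he₀
  set t : ℝ := x 0 with ht
  set v : EuclideanSpace ℝ (Fin n) := x - t • e₀ with hv
  set r : ℝ := ‖v‖ with hrdef
  set t' : ℝ := max (-d₁) (min d₁ t) with ht'
  have ht'mem : t' ∈ Set.Icc (-d₁) d₁ :=
    ⟨le_max_left _ _, max_le (by linarith) (min_le_left _ _)⟩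
  have ht'mem2 : t' ∈ Set.Icc (-d₂) d₂ :=
    ⟨by linarith [ht'mem.1], by linarith [ht'mem.2]⟩
  have htt' : |t - t'| ≤ M := by
    rcases le_total t (-d₁) with h | h
    · have h1 : t' = -d₁ := by
        rw [ht', min_eq_right (by linarith), max_eq_left h]
      rw [h1, abs_le]; constructor <;> linarith
    · rcases le_total d₁ t with h2 | h2
      · have h1 : t' = d₁ := by
          rw [ht', min_eq_left h2, max_eq_right (by linarith)]
        rw [h1, abs_le]; constructor <;> linarith
      · have h1 : t' = t := by
          rw [ht', min_eq_right h2, max_eq_right h]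
        rw [h1]; simp [hM]
  have hLip2 : dist (φ₂ t) (φ₂ t') ≤ dist t t' := by
    have := h2L.dist_le_mul t ⟨ht1, ht2⟩ t' ht'mem2
    simpa using this
  have hφ2t : φ₂ t ≤ φ₁ t' + 2 * M := by
    have h1 : |φ₂ t' - φ₁ t'| ≤ M := hdiff t' ht'mem
    have h2 : |φ₂ t - φ₂ t'| ≤ M := by
      rw [← Real.dist_eq]
      exact hLip2.trans (by rw [Real.dist_eq]; exact htt')
    have := abs_le.1 h1
    have := abs_le.1 h2
    linarith [this.2]
  have hrle : r ≤ φ₁ t' + 2 * M := le_trans hr hφ2t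
  have hv0 : v 0 = 0 := by
    simp [hv, he₀, PiLp.sub_apply, PiLp.smul_apply, EuclideanSpace.single_apply, ← ht]
  have hne₀ : ‖e₀‖ = 1 := by simp [he₀]
  have hφ1pos : 0 < φ₁ t' := h1p t' ht'mem
  have hxeq : x = t • e₀ + v := by rw [hv]; abel
  rcases le_total r (φ₁ t') with hcase | hcase
  · -- no rescaling needed
    refine ⟨t' • e₀ + v, Or.inl ⟨?_, ?_⟩, ?_⟩
    · have : (t' • e₀ + v) 0 = t' := by
        simp [PiLp.add_apply, PiLp.smul_apply, he₀, EuclideanSpace.single_apply, hv0]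
      rw [this]; exact ht'mem
    · have h0 : (t' • e₀ + v) 0 = t' := by
        simp [PiLp.add_apply, PiLp.smul_apply, he₀, EuclideanSpace.single_apply, hv0]
      rw [h0]
      have : t' • e₀ + v - t' • e₀ = v := by abel
      rw [this]; exact hcase
    · rw [dist_eq_norm, hxeq]
      have : t • e₀ + v - (t' • e₀ + v) = (t - t') • e₀ := by
        rw [sub_smul]; abel
      rw [this, norm_smul, hne₀]
      simpa using by linarith [htt']
  · -- rescale radially
    have hrpos : 0 < r := lt_of_lt_of_le hφ1pos hcase
    set lam : ℝ := φ₁ t' / r with hlam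
    have hlam0 : 0 ≤ lam := le_of_lt (div_pos hφ1pos hrpos)
    have hlam1 : lam ≤ 1 := (div_le_one hrpos).2 hcase
    refine ⟨t' • e₀ + lam • v, Or.inl ⟨?_, ?_⟩, ?_⟩
    · have : (t' • e₀ + lam • v) 0 = t' := by
        simp [PiLp.add_apply, PiLp.smul_apply, he₀, EuclideanSpace.single_apply, hv0]
      rw [this]; exact ht'mem
    · have h0 : (t' • e₀ + lam • v) 0 = t' := by
        simp [PiLp.add_apply, PiLp.smul_apply, he₀, EuclideanSpace.single_apply, hv0]
      rw [h0]
      have h1 : t' • e₀ + lam • v - t' • e₀ = lam • v := by abel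
      rw [h1, norm_smul, Real.norm_eq_abs, abs_of_nonneg hlam0, ← hrdef, hlam, div_mul_cancel₀ _ (ne_of_gt hrpos)]
    · rw [dist_eq_norm, hxeq]
      have h1 : t • e₀ + v - (t' • e₀ + lam • v) = (t - t') • e₀ + (1 - lam) • v := by
        rw [sub_smul, sub_smul, one_smul]; abel
      rw [h1]
      have h2 : ‖(t - t') • e₀ + (1 - lam) • v‖ ≤ |t - t'| + (1 - lam) * r := by
        calc _ ≤ ‖(t - t') • e₀‖ + ‖(1 - lam) • v‖ := norm_add_le _ _
          _ = |t - t'| + (1 - lam) * r := by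
            rw [norm_smul, norm_smul, hne₀, mul_one, Real.norm_eq_abs, Real.norm_eq_abs,
              abs_of_nonneg (by linarith : (0:ℝ) ≤ 1 - lam), ← hrdef]
      have h3 : (1 - lam) * r = r - φ₁ t' := by
        rw [hlam, sub_mul, one_mul, div_mul_cancel₀ _ (ne_of_gt hrpos)]
      have h4 : r - φ₁ t' ≤ 2 * M := by linarith
      linarith [htt']
end

section
/- Let r > 0, h > 0, Λ ∈ ℝ, and suppose r_min > 0 satisfies the Euler–Lagrange relation (r_min - r)/h = -(n-1)/r_min + Λ together with the bound |r_min - r| ≤ γ h^{1/2} for some γ > 0. If Λ = (n-1)/r, then there exists h₀ > 0 depending only on n, r, γ (e.g. h₀ with γ h₀^{1/2} < r/2 and the uniqueness condition below) such that for h ≤ h₀ the only solution is r_min = r. More generally, for h ≤ h₀, r_min - r = (Λ - (n-1)/r)h + O(h²) with the implicit constant depending only on n, r, Λ, γ. -/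
open Set

set_option maxHeartbeats 1000000 in
/-- If r_min > 0 solves the discrete Euler–Lagrange relation
(r_min - r)/h = -(n-1)/r_min + Λ and |r_min - r| ≤ γ h^{1/2}, then there exist
h₀ > 0 and C > 0 (depending only on n, r, Λ, γ) such that for 0 < h ≤ h₀:
if Λ = (n-1)/r then r_min = r, and in general
|r_min - r - (Λ - (n-1)/r) h| ≤ C h². -/
theorem discrete_euler_lagrange_radius
    (n : ℕ) (hn : 2 ≤ n) (r Λ γ : ℝ) (hr : 0 < r) (hγ : 0 < γ) :
    ∃ h₀ : ℝ, 0 < h₀ ∧ ∃ C : ℝ, 0 < C ∧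
      ∀ h rmin : ℝ, 0 < h → h ≤ h₀ → 0 < rmin →
        (rmin - r) / h = -((n:ℝ) - 1) / rmin + Λ →
        |rmin - r| ≤ γ * h ^ ((1:ℝ)/2) →
        ((Λ = ((n:ℝ) - 1) / r → rmin = r) ∧
         |rmin - r - (Λ - ((n:ℝ) - 1) / r) * h| ≤ C * h^2) := by
  have h2n : (2:ℝ) ≤ (n:ℝ) := by exact_mod_cast hn
  have hn1 : (1:ℝ) ≤ (n:ℝ) - 1 := by linarith
  have hn1pos : (0:ℝ) < (n:ℝ) - 1 := by linarith
  obtain ⟨M, hM⟩ : ∃ M : ℝ, M = |Λ| + 2 * ((n:ℝ) - 1) / r := ⟨_, rfl⟩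
  have hMpos : 0 < M := by
    have h1 : 0 < 2 * ((n:ℝ) - 1) / r := by positivity
    have h2 := abs_nonneg Λ
    rw [hM]; linarith
  refine ⟨min ((r/(2*γ))^2) (r^2/(4*((n:ℝ)-1))), ?_, 2*((n:ℝ)-1)*M/r^2 + 1, ?_, ?_⟩
  · apply lt_min <;> positivity
  · positivity
  intro h rmin hh hhle hrm hEL hbound
  -- bound h^{1/2}
  have hle1 : h ≤ (r/(2*γ))^2 := le_trans hhle (min_le_left _ _)
  have hle2 : h ≤ r^2/(4*((n:ℝ)-1)) := le_trans hhle (min_le_right _ _)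
  have hsq : h ^ ((1:ℝ)/2) ≤ r/(2*γ) := by
    have h1 : h ^ ((1:ℝ)/2) ≤ ((r/(2*γ))^2) ^ ((1:ℝ)/2) :=
      Real.rpow_le_rpow hh.le hle1 (by norm_num)
    have h2 : ((r/(2*γ))^2) ^ ((1:ℝ)/2) = r/(2*γ) := by
      rw [← Real.rpow_natCast (r/(2*γ)) 2, ← Real.rpow_mul (by positivity)]
      norm_num
    rwa [h2] at h1
  have hbound' : |rmin - r| ≤ r/2 := by
    refine hbound.trans ?_
    have : γ * h ^ ((1:ℝ)/2) ≤ γ * (r/(2*γ)) :=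
      mul_le_mul_of_nonneg_left hsq hγ.le
    calc γ * h ^ ((1:ℝ)/2) ≤ γ * (r/(2*γ)) := this
      _ = r/2 := by field_simp
  have hrm2 : r/2 ≤ rmin := by
    have := abs_le.mp hbound'
    linarith [this.1]
  rw [div_eq_iff hh.ne'] at hEL
  -- hEL : rmin - r = (-(n-1)/rmin + Λ) * h
  -- crude bound: |rmin - r| ≤ h * M
  have hdivle : ((n:ℝ)-1)/rmin ≤ 2*((n:ℝ)-1)/r := by
    rw [div_le_div_iff₀ hrm (by positivity)]
    nlinarith
  have hcrude : |rmin - r| ≤ h * M := by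
    rw [hEL, abs_mul, abs_of_pos hh, mul_comm]
    apply mul_le_mul_of_nonneg_left _ hh.le
    calc |-((n:ℝ)-1)/rmin + Λ| ≤ |-((n:ℝ)-1)/rmin| + |Λ| := abs_add_le _ _
      _ = ((n:ℝ)-1)/rmin + |Λ| := by
          rw [abs_div, abs_neg, abs_of_pos hn1pos, abs_of_pos hrm]
      _ ≤ M := by rw [hM]; linarith
  -- key identity
  have hEL2 := hEL
  have h0 : rmin ≠ 0 := hrm.ne'
  field_simp at hEL2
  have key : rmin - r - (Λ - ((n:ℝ)-1)/r) * h = h * (((n:ℝ)-1) * (rmin - r)) / (r * rmin) := by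
    rw [eq_div_iff (by positivity : r * rmin ≠ 0)]
    field_simp
    linear_combination r * hEL2
  have habs : |rmin - r - (Λ - ((n:ℝ)-1)/r) * h| = h * (((n:ℝ)-1) * |rmin - r|) / (r * rmin) := by
    rw [key, abs_div, abs_mul, abs_mul, abs_of_pos hh, abs_of_pos hn1pos,
      abs_of_pos (mul_pos hr hrm)]
  have hrr : r^2/2 ≤ r * rmin := by nlinarith
  constructor
  · intro hΛ
    have hz : rmin - r = h * (((n:ℝ)-1) * (rmin - r)) / (r * rmin) := by
      rw [← key, hΛ]; ring
    have hz' : (rmin - r) * (r * rmin) = h * (((n:ℝ)-1) * (rmin - r)) :=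
      (eq_div_iff (by positivity : (r * rmin) ≠ 0)).mp hz
    have hfac : (rmin - r) * (r * rmin - h * ((n:ℝ)-1)) = 0 := by linear_combination hz'
    have h6' : h * (4*((n:ℝ)-1)) ≤ r^2 := (le_div_iff₀ (by positivity)).mp hle2
    have hpos2 : 0 < r * rmin - h * ((n:ℝ)-1) := by nlinarith
    rcases mul_eq_zero.mp hfac with h7 | h7
    · linarith [sub_eq_zero.mp h7]
    · linarith
  · rw [habs, div_le_iff₀ (mul_pos hr hrm)]
    calc h * (((n:ℝ)-1) * |rmin - r|) ≤ h * (((n:ℝ)-1) * (h * M)) := by gcongr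
      _ = (2*((n:ℝ)-1)*M/r^2) * h^2 * (r^2/2) := by field_simp
      _ ≤ (2*((n:ℝ)-1)*M/r^2) * h^2 * (r * rmin) :=
          mul_le_mul_of_nonneg_left hrr (by positivity)
      _ ≤ (2*((n:ℝ)-1)*M/r^2 + 1) * h^2 * (r * rmin) := by
          refine mul_le_mul_of_nonneg_right
            (mul_le_mul_of_nonneg_right (by linarith [hMpos]) (sq_nonneg h))
            (mul_pos hr hrm).le
end

section
/- Let r > 0, η > 0, α > 0, Λ₀ ≥ 2η, and δ > 0 sufficiently small (depending on α, η, Λ₀). For 0 < h ≤ δ and integers 2 ≤ i ≤ ⌊δ/h⌋ + 1, let l_{h,i} = Λ₀h(i-1) + αh^{1/4}, d_{h,i} = 2ηh(i-1) + αh^{1/2}, a_{h,i} = Λ₀^{1/2}/l_{h,i}, and φ_{h,i}(t) = (a_{h,i}/2)(t² - d_{h,i}²) + l_{h,i}. Then |φ_{h,i}(t) - φ_{h,i-1}(t)| ≤ 2Λ₀ h for all t ∈ [-d_{h,i-1}, d_{h,i-1}]. -/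
open Set

/-- l_{h,i} = Λ₀ h (i-1) + α h^{1/4}. -/
noncomputable def lhi (Λ₀ α h : ℝ) (i : ℕ) : ℝ :=
  Λ₀ * h * ((i:ℝ) - 1) + α * h ^ ((1:ℝ)/4)

/-- d_{h,i} = 2η h (i-1) + α h^{1/2}. -/
noncomputable def dhi (η α h : ℝ) (i : ℕ) : ℝ :=
  2 * η * h * ((i:ℝ) - 1) + α * h ^ ((1:ℝ)/2)

/-- φ_{h,i}(t) = (a_{h,i}/2)(t² - d_{h,i}²) + l_{h,i} with a_{h,i} = Λ₀^{1/2}/l_{h,i}. -/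
noncomputable def phihi (Λ₀ η α h : ℝ) (i : ℕ) (t : ℝ) : ℝ :=
  (Real.sqrt Λ₀ / lhi Λ₀ α h i) / 2 * (t^2 - (dhi η α h i)^2) + lhi Λ₀ α h i

set_option maxHeartbeats 800000 in
lemma key_ineq_s13 (Λ₀ η h t L1 L2 D1 D2 s a1 a2 : ℝ)
    (hh : 0 < h) (hη : 0 < η) (hηΛ : 2*η ≤ Λ₀)
    (hs1 : 1 ≤ s) (hss : s * s = Λ₀)
    (hL1 : 0 < L1) (hD1 : 0 ≤ D1)
    (hL2 : L2 = L1 + Λ₀*h) (hD2 : D2 = D1 + 2*η*h)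
    (ha1 : a1 = s / L1) (ha2 : a2 = s / L2)
    (k1 : s * D1 ≤ L1) (k2 : s * D2 ≤ L2)
    (ht : t^2 ≤ D1^2) :
    |a2 / 2 * (t^2 - D2^2) + L2 - (a1 / 2 * (t^2 - D1^2) + L1)| ≤ 2*Λ₀*h := by
  have hΛ0 : (0:ℝ) < Λ₀ := by nlinarith
  have hΛh : 0 < Λ₀ * h := mul_pos hΛ0 hh
  have hηh : 0 < η * h := mul_pos hη hh
  have hL2p : 0 < L2 := by rw [hL2]; linarith
  have hD21 : D1 ≤ D2 := by rw [hD2]; linarith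
  have hD2p : 0 ≤ D2 := le_trans hD1 hD21
  have hsp : (0:ℝ) < s := by linarith
  have ha1p : 0 < a1 := ha1 ▸ div_pos hsp hL1
  have ha2p : 0 < a2 := ha2 ▸ div_pos hsp hL2p
  have b1 : a1 * D1 ≤ 1 := by
    rw [ha1, div_mul_eq_mul_div, div_le_one hL1]; linarith
  have b2 : a2 * D2 ≤ 1 := by
    rw [ha2, div_mul_eq_mul_div, div_le_one hL2p]; linarith
  have b2' : a2 * D1 ≤ 1 := by
    have := mul_le_mul_of_nonneg_left hD21 ha2p.le
    linarith
  have b3 : a2 ≤ a1 := by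
    rw [ha1, ha2]
    apply div_le_div_of_nonneg_left hsp.le hL1
    linarith
  have b4 : s * (a1 - a2) = a1 * a2 * (Λ₀ * h) := by
    rw [ha1, ha2, hL2]
    field_simp
    ring
  have hd : 0 ≤ a1 - a2 := sub_nonneg.2 b3
  have h1 : (a1 - a2) * D1^2 ≤ s * ((a1 - a2) * D1^2) := by
    linarith [mul_nonneg (mul_nonneg (sub_nonneg.2 hs1) hd) (sq_nonneg D1)]
  have h2 : s * ((a1 - a2) * D1^2) = (Λ₀ * h) * ((a1*D1) * (a2*D1)) := by
    linear_combination D1^2 * b4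
  have p1 : 0 ≤ a2 * D1 := mul_nonneg ha2p.le hD1
  have p2 : (a1*D1) * (a2*D1) ≤ 1 := by
    linarith [mul_nonneg (sub_nonneg.2 b1) p1]
  have p3 : (Λ₀*h) * ((a1*D1)*(a2*D1)) ≤ Λ₀*h := by
    linarith [mul_nonneg hΛh.le (sub_nonneg.2 p2)]
  have b5 : (a1 - a2) * D1^2 ≤ Λ₀ * h := by linarith
  have f2' : a2*D2^2 - a2*D1^2 ≤ 2*Λ₀*h := by
    have e : a2*D2^2 - a2*D1^2 = (2*η*h)*(a2*D2 + a2*D1) := by rw [hD2]; ring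
    have hx : a2*D2 + a2*D1 ≤ 2 := by linarith
    have hy : (0:ℝ) ≤ 2*η*h := by positivity
    have := mul_le_mul_of_nonneg_left hx hy
    have hz : 0 ≤ h*(Λ₀ - 2*η) := mul_nonneg hh.le (by linarith)
    linarith [e, this, hz]
  have f1' : a2*D1^2 ≤ a2*D2^2 := by
    have hsq2 : D1^2 ≤ D2^2 := by nlinarith
    exact mul_le_mul_of_nonneg_left hsq2 ha2p.le
  have f3' : 0 ≤ (a1 - a2) * t^2 := mul_nonneg hd (sq_nonneg t)
  have f4' : (a1 - a2) * t^2 ≤ (a1 - a2) * D1^2 :=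
    mul_le_mul_of_nonneg_left ht hd
  rw [hL2, abs_le]
  constructor
  · linarith [f1', f2', f3', f4', b5]
  · linarith [f1', f2', f3', f4', b5]

set_option maxHeartbeats 800000 in
/-- For Λ₀ ≥ max{2η, 4η², 1} and δ > 0 small enough (depending on α, η, Λ₀),
for all 0 < h ≤ δ and 2 ≤ i ≤ ⌊δ/h⌋ + 1 we have
|φ_{h,i}(t) - φ_{h,i-1}(t)| ≤ 2Λ₀ h for all t ∈ [-d_{h,i-1}, d_{h,i-1}]. -/
theorem consecutive_parabolas_close
    (r η α Λ₀ : ℝ) (hr : 0 < r) (hη : 0 < η) (hα : 0 < α)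
    (hΛ1 : 1 ≤ Λ₀) (hΛη : 2 * η ≤ Λ₀) (hΛη2 : 4 * η^2 ≤ Λ₀) :
    ∃ δ : ℝ, 0 < δ ∧ ∀ h : ℝ, 0 < h → h ≤ δ →
      ∀ i : ℕ, 2 ≤ i → (i : ℝ) ≤ δ / h + 1 →
        ∀ t ∈ Set.Icc (-(dhi η α h (i-1))) (dhi η α h (i-1)),
          |phihi Λ₀ η α h i t - phihi Λ₀ η α h (i-1) t| ≤ 2 * Λ₀ * h := by
  have hΛ0 : (0:ℝ) < Λ₀ := by linarith
  refine ⟨(Λ₀^2)⁻¹, by positivity, ?_⟩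
  intro h hh hhδ i hi2 _ t htmem
  obtain ⟨j, rfl⟩ : ∃ j, i = j + 2 := ⟨i - 2, by omega⟩
  have hj1 : j + 2 - 1 = j + 1 := by omega
  rw [hj1] at htmem ⊢
  have hsnn : 0 ≤ Real.sqrt Λ₀ := Real.sqrt_nonneg _
  have hss : Real.sqrt Λ₀ * Real.sqrt Λ₀ = Λ₀ := Real.mul_self_sqrt hΛ0.le
  have hs1 : 1 ≤ Real.sqrt Λ₀ := by nlinarith
  have h2ηs : 2*η ≤ Real.sqrt Λ₀ := by nlinarith
  have hq : (0:ℝ) < h ^ ((1:ℝ)/4) := Real.rpow_pos_of_pos hh _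
  have hq2 : (0:ℝ) < h ^ ((1:ℝ)/2) := Real.rpow_pos_of_pos hh _
  have hq4 : (h ^ ((1:ℝ)/4))^(4:ℕ) = h := by
    rw [← Real.rpow_natCast (h ^ ((1:ℝ)/4)) 4, ← Real.rpow_mul hh.le]
    norm_num
  have hs4 : (Real.sqrt Λ₀)^(4:ℕ) = Λ₀^2 := by
    have e : (Real.sqrt Λ₀)^(4:ℕ) = (Real.sqrt Λ₀ * Real.sqrt Λ₀)^2 := by ring
    rw [e, hss]
  have hP : (0:ℝ) < Λ₀^2 := by positivity
  have hΛh : Λ₀^2 * h ≤ 1 := by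
    have := mul_le_mul_of_nonneg_left hhδ hP.le
    rwa [mul_inv_cancel₀ hP.ne'] at this
  have hsq : Real.sqrt Λ₀ * h ^ ((1:ℝ)/4) ≤ 1 := by
    by_contra hc
    push_neg at hc
    have h4 : 1 < (Real.sqrt Λ₀ * h ^ ((1:ℝ)/4))^(4:ℕ) := one_lt_pow₀ hc (by norm_num)
    rw [mul_pow, hq4, hs4] at h4
    linarith
  have hhalf : h ^ ((1:ℝ)/2) = h ^ ((1:ℝ)/4) * h ^ ((1:ℝ)/4) := by
    rw [← Real.rpow_add hh]; norm_num
  have hsh : Real.sqrt Λ₀ * (α * h ^ ((1:ℝ)/2)) ≤ α * h ^ ((1:ℝ)/4) := by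
    rw [hhalf]
    have := mul_le_mul_of_nonneg_left hsq (le_of_lt (mul_pos hα hq))
    nlinarith [this]
  have hm : (0:ℝ) ≤ (j:ℝ) := Nat.cast_nonneg j
  have gen : ∀ c:ℝ, 0 ≤ c → Real.sqrt Λ₀ * (2*η*h*c) ≤ Λ₀*h*c := by
    intro c hc
    have key : 0 ≤ (Real.sqrt Λ₀ - 2*η) * (Real.sqrt Λ₀ * (h*c)) :=
      mul_nonneg (sub_nonneg.2 h2ηs) (mul_nonneg hsnn (mul_nonneg hh.le hc))
    have hs2 : Real.sqrt Λ₀ * Real.sqrt Λ₀ * (h*c) = Λ₀*(h*c) := by rw [hss]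
    nlinarith [key, hs2]
  have k1 : Real.sqrt Λ₀ * dhi η α h (j+1) ≤ lhi Λ₀ α h (j+1) := by
    rw [dhi, lhi]
    push_cast
    linarith [gen ((j:ℝ)+1-1) (by linarith), hsh]
  have k2 : Real.sqrt Λ₀ * dhi η α h (j+2) ≤ lhi Λ₀ α h (j+2) := by
    rw [dhi, lhi]
    push_cast
    linarith [gen ((j:ℝ)+2-1) (by linarith), hsh]
  have hL1 : 0 < lhi Λ₀ α h (j+1) := by
    rw [lhi]; push_cast
    have h1 : (0:ℝ) ≤ Λ₀*h*((j:ℝ)+1-1) :=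
      mul_nonneg (mul_nonneg hΛ0.le hh.le) (by linarith)
    linarith [mul_pos hα hq]
  have hD1 : 0 ≤ dhi η α h (j+1) := by
    rw [dhi]; push_cast
    have h1 : (0:ℝ) ≤ 2*η*h*((j:ℝ)+1-1) := by
      have : (0:ℝ) ≤ (j:ℝ)+1-1 := by linarith
      positivity
    linarith [mul_pos hα hq2]
  obtain ⟨htl, htr⟩ := htmem
  have ht : t^2 ≤ (dhi η α h (j+1))^2 := sq_le_sq' htl htr
  have hL2 : lhi Λ₀ α h (j+2) = lhi Λ₀ α h (j+1) + Λ₀*h := by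
    rw [lhi, lhi]; push_cast; ring
  have hD2 : dhi η α h (j+2) = dhi η α h (j+1) + 2*η*h := by
    rw [dhi, dhi]; push_cast; ring
  rw [phihi, phihi]
  exact key_ineq_s13 Λ₀ η h t (lhi Λ₀ α h (j+1)) (lhi Λ₀ α h (j+2))
    (dhi η α h (j+1)) (dhi η α h (j+2)) (Real.sqrt Λ₀)
    (Real.sqrt Λ₀ / lhi Λ₀ α h (j+1)) (Real.sqrt Λ₀ / lhi Λ₀ α h (j+2))
    hh hη hΛη hs1 hss hL1 hD1 hL2 hD2 rfl rfl k1 k2 ht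
end
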